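/- arXiv:1110.5826 — 3 statements merged into one kernel-verified Lean document; each statement's English description precedes it below -/
import Mathlib

section
/- With parameters r ∈ ℤ₊ and γ ∈ (0,1), the probability π_bad that a randomly shifted dyadic cube I+β is bad satisfies π_bad ≤ 4n·2^{-rγ}/(1 − 2^{-γ}). In particular, if r is chosen large enough that 4n·2^{-rγ} < 1 − 2^{-γ}, then π_good := 1 − π_bad > 0. -/
open MeasureTheory Set ProbabilityTheory

noncomputable section

/-- The (shifted) dyadic cube of generation `j` (sidelength `2^(-j)`) at position `q`,
translated by the vector `v`. -/
def dyCube {n : ℕ} (j : ℤ) (q : Fin n → ℤ) (v : Fin n → ℝ) : Set (Fin n → ℝ) :=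
  Set.univ.pi fun i => Set.Ico ((2:ℝ)^(-j) * q i + v i) ((2:ℝ)^(-j) * (q i + 1) + v i)

/-- The translation vector `∑_{i : 2^{-i} < 2^{-j}} 2^{-i} β_i` determining the position of the
shift of a cube of generation `j` by the shift parameter `β`. -/
def shiftVec {n : ℕ} (j : ℤ) (β : ℤ → Fin n → Fin 2) : Fin n → ℝ :=
  fun i => ∑' k : ℤ, if j < k then (2:ℝ)^(-k) * ((β k i : ℕ) : ℝ) else 0

/-- Distance between two sets in `ℝ^n`. -/
def setDist {n : ℕ} (s t : Set (Fin n → ℝ)) : ℝ :=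
  (⨅ x ∈ s, EMetric.infEdist x t).toReal

/-- The cube `I + β` of generation `j` at position `q` is "bad" with parameters `r, γ` in the
shifted dyadic system `𝒟^β`: some dyadic ancestor `J = (I+β)^(k)`, `k ≥ r`, satisfies
`dist(I+β, Jᶜ) ≤ ℓ(I)^γ ℓ(J)^(1-γ)`. -/
def BadCube {n : ℕ} (r : ℕ) (γ : ℝ) (β : ℤ → Fin n → Fin 2) (j : ℤ) (q : Fin n → ℤ) : Prop :=
  ∃ k : ℕ, r ≤ k ∧ ∃ q' : Fin n → ℤ,
    dyCube j q (shiftVec j β) ⊆ dyCube (j - k) q' (shiftVec (j - k) β) ∧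
    setDist (dyCube j q (shiftVec j β)) (dyCube (j - k) q' (shiftVec (j - k) β))ᶜ
      ≤ ((2:ℝ)^(-j)) ^ γ * ((2:ℝ)^(-(j - (k:ℤ)))) ^ (1 - γ)



section AuxLemmas
open Finset

lemma bits_inj : ∀ (k : ℕ) (b b' : ℕ → ℕ), (∀ t, b t ≤ 1) → (∀ t, b' t ≤ 1) →
    (∑ t ∈ range k, 2^t * b t) = (∑ t ∈ range k, 2^t * b' t) → ∀ t < k, b t = b' t := by
  intro k
  induction k with
  | zero => intro b b' _ _ _ t ht; omega
  | succ m ih =>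
    intro b b' hb hb' hsum t ht
    rw [Finset.sum_range_succ' (fun t => 2^t * b t), Finset.sum_range_succ' (fun t => 2^t * b' t)] at hsum
    simp only [pow_succ, pow_zero, one_mul] at hsum
    have h1 : ∑ t ∈ range m, 2 ^ t * 2 * b (t+1) = 2 * ∑ t ∈ range m, 2 ^ t * b (t+1) := by
      rw [Finset.mul_sum]; congr 1; ext t; ring
    have h2 : ∑ t ∈ range m, 2 ^ t * 2 * b' (t+1) = 2 * ∑ t ∈ range m, 2 ^ t * b' (t+1) := by
      rw [Finset.mul_sum]; congr 1; ext t; ring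
    rw [h1, h2] at hsum
    have hb0 := hb 0; have hb'0 := hb' 0
    have key : b 0 = b' 0 ∧ (∑ t ∈ range m, 2 ^ t * b (t+1)) = ∑ t ∈ range m, 2 ^ t * b' (t+1) := by
      omega
    rcases Nat.eq_zero_or_pos t with rfl | htpos
    · exact key.1
    · obtain ⟨s, rfl⟩ := Nat.exists_eq_add_of_le htpos
      have := ih (fun u => b (u+1)) (fun u => b' (u+1)) (fun u => hb _) (fun u => hb' _) key.2 s (by omega)
      simpa [Nat.add_comm] using this

lemma sum_pow_lt (k : ℕ) (b : ℕ → ℕ) (hb : ∀ t, b t ≤ 1) : (∑ t ∈ range k, 2^t * b t) < 2^k := by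
  calc (∑ t ∈ range k, 2^t * b t) ≤ ∑ t ∈ range k, 2^t := by
        apply Finset.sum_le_sum; intro t _; have := hb t; nlinarith [pow_pos (by norm_num : 0 < 2) t]
    _ < 2^k := by
        have h : ∑ t ∈ range k, 2^t = 2^k - 1 := by
          induction k with
          | zero => simp
          | succ m ihm => rw [Finset.sum_range_succ, ihm]; have : 1 ≤ 2^m := Nat.one_le_two_pow; ring_nf; omega
        have : 1 ≤ 2^k := Nat.one_le_two_pow
        omega

lemma summable_shift (j : ℤ) (c : ℤ → ℝ) (hc0 : ∀ m, 0 ≤ c m) (hc1 : ∀ m, c m ≤ 1) :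
    Summable (fun m : ℤ => if j < m then (2:ℝ)^(-m) * c m else 0) := by
  set f : ℤ → ℝ := fun m => if j < m then (2:ℝ)^(-m) * c m else 0 with hf
  have he : ∀ m, f m ≠ 0 → m ∈ Set.range (fun t : ℕ => j + 1 + (t:ℤ)) := by
    intro m hm
    have hjm : j < m := by by_contra h; simp [hf, h] at hm
    refine ⟨(m - (j+1)).toNat, ?_⟩
    simp only []
    omega
  have hinj : Function.Injective (fun t : ℕ => j + 1 + (t:ℤ)) := by
    intro a b h; simpa using h
  rw [← Function.Injective.summable_iff hinj (fun m hm => by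
    by_contra hne; exact hm (he m (by simpa using hne)))]
  apply Summable.of_nonneg_of_le (f := fun t : ℕ => (2:ℝ)^(-(j+1)) * (2⁻¹)^t)
  · intro t
    simp only [hf, Function.comp]
    split
    · exact mul_nonneg (by positivity) (hc0 _)
    · exact le_refl 0
  · intro t
    have h1 : ((fun m => f m) ∘ (fun t : ℕ => j + 1 + (t:ℤ))) t = (2:ℝ)^(-(j+1+(t:ℤ))) * c (j+1+t) := by
      simp only [hf, Function.comp]
      rw [if_pos (by omega)]
    rw [h1]
    have h2 : (2:ℝ)^(-(j+1+(t:ℤ))) = (2:ℝ)^(-(j+1)) * (2⁻¹)^t := by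
      rw [show -(j+1+(t:ℤ)) = -(j+1) + (-(t:ℤ)) by ring, zpow_add₀ (by norm_num : (2:ℝ) ≠ 0)]
      congr 1
      rw [zpow_neg, zpow_natCast, ← inv_pow]
    rw [h2]
    have : 0 < (2:ℝ)^(-(j+1)) * (2⁻¹:ℝ)^t := by positivity
    nlinarith [hc1 (j+1+(t:ℤ)), hc0 (j+1+(t:ℤ)), (by positivity : (0:ℝ) < (2:ℝ)^(-(j+1)) * (2⁻¹:ℝ)^t)]
  · exact (summable_geometric_of_lt_one (by norm_num) (by norm_num)).mul_left _

lemma shiftVec_split {n : ℕ} (j : ℤ) (k : ℕ) (β : ℤ → Fin n → Fin 2) (i : Fin n) :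
    shiftVec (j - k) β i = shiftVec j β i
      + ∑ t ∈ Finset.range k, (2:ℝ)^(-(j - (t:ℤ))) * ((β (j - t) i : ℕ) : ℝ) := by
  have hc0 : ∀ m : ℤ, (0:ℝ) ≤ ((β m i : ℕ) : ℝ) := fun m => by positivity
  have hc1 : ∀ m : ℤ, ((β m i : ℕ) : ℝ) ≤ 1 := fun m => by
    have : (β m i : ℕ) ≤ 1 := by omega
    exact_mod_cast this
  set A : ℤ → ℝ := fun m => (2:ℝ)^(-m) * ((β m i : ℕ) : ℝ) with hA
  set h : ℤ → ℝ := fun m => if m ∈ Finset.Ioc (j - (k:ℤ)) j then A m else 0 with hh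
  have hsum1 : Summable (fun m : ℤ => if j < m then A m else 0) := summable_shift j _ hc0 hc1
  have hsumh : Summable h := summable_of_ne_finset_zero (s := Finset.Ioc (j - (k:ℤ)) j)
    (fun m hm => by simp only [hh]; rw [if_neg hm])
  have hpt : (fun m : ℤ => if j - (k:ℤ) < m then A m else 0)
      = fun m => (if j < m then A m else 0) + h m := by
    funext m
    simp only [hh]
    by_cases h1 : j < m
    · rw [if_pos (by omega : j - (k:ℤ) < m), if_pos h1,
        if_neg (by simp only [Finset.mem_Ioc]; omega), add_zero]
    · by_cases h2 : j - (k:ℤ) < m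
      · rw [if_pos h2, if_neg h1, if_pos (by simp only [Finset.mem_Ioc]; omega), zero_add]
      · rw [if_neg h2, if_neg h1, if_neg (by simp only [Finset.mem_Ioc]; omega), add_zero]
  have : shiftVec (j - k) β i = ∑' m : ℤ, ((if j < m then A m else 0) + h m) := by
    rw [shiftVec, ← hpt]
  rw [this, Summable.tsum_add hsum1 hsumh]
  congr 1
  rw [tsum_eq_sum (s := Finset.Ioc (j - (k:ℤ)) j)
    (fun m hm => by simp only [hh]; rw [if_neg hm])]
  have h1 : ∑ m ∈ Finset.Ioc (j - (k:ℤ)) j, h m = ∑ m ∈ Finset.Ioc (j - (k:ℤ)) j, A m :=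
    Finset.sum_congr rfl (fun m hm => by simp only [hh]; rw [if_pos hm])
  rw [h1]
  have himg : Finset.Ioc (j - (k:ℤ)) j = (Finset.range k).image (fun t : ℕ => j - (t:ℤ)) := by
    ext m
    simp only [Finset.mem_Ioc, Finset.mem_image, Finset.mem_range]
    constructor
    · intro hm; exact ⟨(j - m).toNat, by omega, by omega⟩
    · rintro ⟨t, ht, rfl⟩; omega
  rw [himg, Finset.sum_image (fun a _ b _ hab => by omega)]

lemma setDist_lower {n : ℕ} (hn : 1 ≤ n) (a b c d : Fin n → ℝ) (ε : ℝ) (hε : 0 ≤ ε)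
    (hab : ∀ i, a i < b i)
    (hca : ∀ i, ε ≤ a i - c i) (hbd : ∀ i, ε ≤ d i - b i) :
    ε ≤ setDist (Set.univ.pi fun i => Set.Ico (a i) (b i))
      (Set.univ.pi fun i => Set.Ico (c i) (d i))ᶜ := by
  set s := Set.univ.pi fun i => Set.Ico (a i) (b i) with hs
  set t := Set.univ.pi fun i => Set.Ico (c i) (d i) with ht
  have i0 : Fin n := ⟨0, hn⟩
  have htc : tᶜ.Nonempty := by
    refine ⟨fun _ => c i0 - 1, ?_⟩
    simp only [ht, Set.mem_compl_iff, Set.mem_pi, Set.mem_univ, Set.mem_Ico, not_forall]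
    exact ⟨i0, trivial, fun h => by linarith [h.1]⟩
  have key : ∀ x ∈ s, ENNReal.ofReal ε ≤ EMetric.infEdist x tᶜ := by
    intro x hx
    rw [EMetric.infEdist, Metric.le_infEDist]
    intro y hy
    simp only [ht, Set.mem_compl_iff, Set.mem_pi, Set.mem_univ, Set.mem_Ico, not_forall] at hy
    obtain ⟨i, -, hyi⟩ := hy
    have hxi : a i ≤ x i ∧ x i < b i := by
      simp only [hs, Set.mem_pi, Set.mem_univ, Set.mem_Ico] at hx
      exact hx i trivial
    have h1 : ε ≤ |x i - y i| := by
      rcases not_and_or.mp hyi with h | h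
      · push_neg at h
        calc ε ≤ a i - c i := hca i
          _ ≤ x i - y i := by linarith
          _ ≤ |x i - y i| := le_abs_self _
      · push_neg at h
        calc ε ≤ d i - b i := hbd i
          _ ≤ y i - x i := by linarith
          _ ≤ |y i - x i| := le_abs_self _
          _ = |x i - y i| := abs_sub_comm _ _
    calc ENNReal.ofReal ε ≤ ENNReal.ofReal |x i - y i| := ENNReal.ofReal_le_ofReal h1
      _ = edist (x i) (y i) := by rw [edist_dist, Real.dist_eq]
      _ ≤ edist x y := edist_le_pi_edist x y i
  have hlow : ENNReal.ofReal ε ≤ ⨅ x ∈ s, EMetric.infEdist x tᶜ := le_iInf₂ key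
  have hne : (⨅ x ∈ s, EMetric.infEdist x tᶜ) ≠ ⊤ := by
    have has : a ∈ s := by
      simp only [hs, Set.mem_pi, Set.mem_univ, Set.mem_Ico]
      exact fun i _ => ⟨le_refl _, hab i⟩
    have : (⨅ x ∈ s, EMetric.infEdist x tᶜ) ≤ EMetric.infEdist a tᶜ := biInf_le _ has
    exact ne_top_of_le_ne_top (Metric.infEDist_ne_top htc) this
  exact (ENNReal.ofReal_le_iff_le_toReal hne).mp hlow

lemma rpow_delta (j : ℤ) (k : ℕ) (γ : ℝ) :
    ((2:ℝ)^(-j)) ^ γ * ((2:ℝ)^(-(j - (k:ℤ)))) ^ (1 - γ)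
      = (2:ℝ)^(-j) * (2:ℝ)^((k:ℝ)*(1-γ)) := by
  have h2 : (0:ℝ) < 2 := by norm_num
  rw [show ((2:ℝ)^(-j) : ℝ) = (2:ℝ)^((-j : ℤ) : ℝ) from (Real.rpow_intCast 2 (-j)).symm,
    show ((2:ℝ)^(-(j - (k:ℤ))) : ℝ) = (2:ℝ)^((-(j - (k:ℤ)) : ℤ) : ℝ) from
      (Real.rpow_intCast 2 (-(j-(k:ℤ)))).symm]
  rw [← Real.rpow_mul h2.le, ← Real.rpow_mul h2.le, ← Real.rpow_add h2, ← Real.rpow_add h2]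
  congr 1
  push_cast
  ring


lemma geom_step {n : ℕ} (hn : 1 ≤ n) (γ : ℝ) (hγ : γ ∈ Set.Ioo (0:ℝ) 1)
    (β : ℤ → Fin n → Fin 2) (j : ℤ) (q : Fin n → ℤ) (k : ℕ) (hk1 : 1 ≤ k) (q' : Fin n → ℤ)
    (hsub : dyCube j q (shiftVec j β) ⊆ dyCube (j - k) q' (shiftVec (j - k) β))
    (hdist : setDist (dyCube j q (shiftVec j β)) (dyCube (j - k) q' (shiftVec (j - k) β))ᶜ
      ≤ ((2:ℝ)^(-j)) ^ γ * ((2:ℝ)^(-(j - (k:ℤ)))) ^ (1 - γ)) :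
    ∃ i : Fin n,
      ((((q i - ∑ t ∈ Finset.range k, 2^t * ((β (j - t) i : ℕ) : ℤ)) % 2^k : ℤ) : ℝ)
          ≤ (2:ℝ)^((k:ℝ)*(1-γ)) ∨
        (((2^k - 1 - (q i - ∑ t ∈ Finset.range k, 2^t * ((β (j - t) i : ℕ) : ℤ)) % 2^k : ℤ)) : ℝ)
          ≤ (2:ℝ)^((k:ℝ)*(1-γ))) := by
  set v := shiftVec j β with hv
  set w := shiftVec (j - k) β with hw
  set T : ℝ := (2:ℝ)^((k:ℝ)*(1-γ)) with hT
  set Mz : Fin n → ℤ := fun i => ∑ t ∈ Finset.range k, 2^t * ((β (j - t) i : ℕ) : ℤ) with hMz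
  set L : Fin n → ℤ := fun i => q i - 2^k * q' i - Mz i with hL
  have h2j : (0:ℝ) < (2:ℝ)^(-j) := by positivity
  have hpow : (2:ℝ)^(-(j-(k:ℤ))) = (2:ℝ)^(-j) * ((2^k : ℕ) : ℝ) := by
    push_cast
    rw [← zpow_natCast (2:ℝ) k, ← zpow_add₀ (by norm_num : (2:ℝ) ≠ 0)]
    congr 1
    ring
  have hwv : ∀ i, w i = v i + (2:ℝ)^(-j) * (Mz i : ℝ) := by
    intro i
    rw [hw, shiftVec_split j k β i, ← hv]
    congr 1
    rw [hMz]
    push_cast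
    rw [Finset.mul_sum]
    apply Finset.sum_congr rfl
    intro t ht
    rw [show -(j - (t:ℤ)) = -j + (t:ℤ) by ring, zpow_add₀ (by norm_num : (2:ℝ) ≠ 0),
      zpow_natCast]
    ring
  -- endpoint inequalities
  have hend : ∀ i, (2:ℝ)^(-(j-(k:ℤ))) * q' i + w i ≤ (2:ℝ)^(-j) * q i + v i ∧
      (2:ℝ)^(-j) * (q i + 1) + v i ≤ (2:ℝ)^(-(j-(k:ℤ))) * (q' i + 1) + w i := by
    rw [dyCube, dyCube] at hsub
    rcases Set.univ_pi_subset_univ_pi_iff.mp hsub with h | ⟨i, hi⟩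
    · intro i
      have := h i
      rw [Set.Ico_subset_Ico_iff (by nlinarith [h2j] : (2:ℝ)^(-j) * q i + v i < (2:ℝ)^(-j) * (q i + 1) + v i)] at this
      exact this
    · exact absurd (by nlinarith [h2j] : ((2:ℝ)^(-j) * q i + v i) < (2:ℝ)^(-j) * (q i + 1) + v i)
        (Set.Ico_eq_empty_iff.mp hi)
  have hgap1 : ∀ i, ((2:ℝ)^(-j) * q i + v i) - ((2:ℝ)^(-(j-(k:ℤ))) * q' i + w i)
      = (2:ℝ)^(-j) * (L i : ℝ) := by
    intro i
    rw [hwv i, hpow, hL]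
    push_cast
    ring
  have hgap2 : ∀ i, ((2:ℝ)^(-(j-(k:ℤ))) * (q' i + 1) + w i) - ((2:ℝ)^(-j) * (q i + 1) + v i)
      = (2:ℝ)^(-j) * (((2^k - 1 - L i : ℤ)) : ℝ) := by
    intro i
    rw [hwv i, hpow, hL]
    push_cast
    ring
  have hL0 : ∀ i, 0 ≤ L i := by
    intro i
    have h := (hend i).1
    have : 0 ≤ (2:ℝ)^(-j) * (L i : ℝ) := by rw [← hgap1 i]; linarith
    have : (0:ℝ) ≤ (L i : ℝ) := nonneg_of_mul_nonneg_right this h2j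
    exact_mod_cast this
  have hL1 : ∀ i, L i ≤ 2^k - 1 := by
    intro i
    have h := (hend i).2
    have h0 : 0 ≤ (2:ℝ)^(-j) * (((2^k - 1 - L i : ℤ)) : ℝ) := by rw [← hgap2 i]; linarith
    have : (0:ℝ) ≤ (((2^k - 1 - L i : ℤ)) : ℝ) := nonneg_of_mul_nonneg_right h0 h2j
    have : (0:ℤ) ≤ 2^k - 1 - L i := by exact_mod_cast this
    omega
  have hres : ∀ i, (q i - Mz i) % 2^k = L i := by
    intro i
    have : q i - Mz i = L i + 2^k * q' i := by rw [hL]; ring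
    rw [this, Int.add_mul_emod_self_left, Int.emod_eq_of_lt (hL0 i) (by have := hL1 i; omega)]
  -- suppose all residues are good; derive contradiction with hdist
  by_contra hcon
  push_neg at hcon
  have hcon' : ∀ i, T < ((L i : ℤ) : ℝ) ∧ T < (((2^k - 1 - L i : ℤ)) : ℝ) := by
    intro i
    have h := hcon i
    rw [hres i] at h
    exact ⟨h.1, h.2⟩
  have hTpos : 0 < T := by rw [hT]; positivity
  haveI : Nonempty (Fin n) := ⟨⟨0, hn⟩⟩
  set δ : ℝ := ((2:ℝ)^(-j)) ^ γ * ((2:ℝ)^(-(j - (k:ℤ)))) ^ (1 - γ) with hδ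
  have hδT : δ = (2:ℝ)^(-j) * T := rpow_delta j k γ
  set a : Fin n → ℝ := fun i => (2:ℝ)^(-j) * q i + v i
  set b : Fin n → ℝ := fun i => (2:ℝ)^(-j) * (q i + 1) + v i
  set c : Fin n → ℝ := fun i => (2:ℝ)^(-(j-(k:ℤ))) * q' i + w i
  set d : Fin n → ℝ := fun i => (2:ℝ)^(-(j-(k:ℤ))) * (q' i + 1) + w i
  set ε : ℝ := Finset.univ.inf' Finset.univ_nonempty (fun i => min (a i - c i) (d i - b i)) with hε
  have hεδ : δ < ε := by
    rw [Finset.lt_inf'_iff]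
    intro i _
    rw [lt_min_iff]
    constructor
    · calc δ = (2:ℝ)^(-j) * T := hδT
        _ < (2:ℝ)^(-j) * (L i : ℝ) := by
            have := (hcon' i).1
            exact (mul_lt_mul_iff_right₀ h2j).mpr this
        _ = a i - c i := (hgap1 i).symm
    · calc δ = (2:ℝ)^(-j) * T := hδT
        _ < (2:ℝ)^(-j) * (((2^k - 1 - L i : ℤ)) : ℝ) := by
            have := (hcon' i).2
            exact (mul_lt_mul_iff_right₀ h2j).mpr this
        _ = d i - b i := (hgap2 i).symm
  have hsd : ε ≤ setDist (dyCube j q v) (dyCube (j-(k:ℕ)) q' w)ᶜ := by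
    have h1 : dyCube j q v = Set.univ.pi fun i => Set.Ico (a i) (b i) := rfl
    have h2 : dyCube (j-(k:ℕ)) q' w = Set.univ.pi fun i => Set.Ico (c i) (d i) := rfl
    rw [h1, h2]
    exact setDist_lower hn a b c d ε (le_trans (by positivity : (0:ℝ) ≤ δ) hεδ.le)
      (fun i => by show (2:ℝ)^(-j) * q i + v i < (2:ℝ)^(-j) * (q i + 1) + v i; nlinarith [h2j])
      (fun i => Finset.inf'_le_of_le _ (Finset.mem_univ i) (min_le_left _ _))
      (fun i => Finset.inf'_le_of_le _ (Finset.mem_univ i) (min_le_right _ _))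
  linarith [hdist, hsd, hεδ]


section Prob
variable {n : ℕ} {Ω : Type*} [MeasurableSpace Ω] (P : Measure Ω) [IsProbabilityMeasure P]
  (B : ℤ → Ω → (Fin n → Fin 2))

lemma card_fiber (hn : 1 ≤ n) (i : Fin n) (b : Fin 2) :
    (Finset.univ.filter (fun v : Fin n → Fin 2 => v i = b)).card = 2^(n-1) := by
  rw [← Fintype.card_subtype]
  have e : {v : Fin n → Fin 2 // v i = b} ≃ ({j : Fin n // j ≠ i} → Fin 2) := {
    toFun := fun v j => v.1 j.1
    invFun := fun f => ⟨fun j => if h : j = i then b else f ⟨j, h⟩, by simp⟩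
    left_inv := by
      rintro ⟨v, hv⟩
      ext j
      by_cases h : j = i
      · subst h; simp [hv]
      · simp [h]
    right_inv := by
      intro f
      ext j
      simp [j.2] }
  rw [Fintype.card_congr e, Fintype.card_fun]
  have hcard : Fintype.card {j : Fin n // j ≠ i} = n - 1 := by
    rw [Fintype.card_subtype_compl, Fintype.card_subtype_eq, Fintype.card_fin]
  rw [hcard, Fintype.card_fin]


lemma prob_bit (hn : 1 ≤ n) (hmeas : ∀ k, Measurable (B k))
    (hunif : ∀ k s, P {ω | B k ω = s} = 1 / 2 ^ n) (m : ℤ) (i : Fin n) (b : Fin 2) :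
    P {ω | B m ω i = b} = 2⁻¹ := by
  have hset : {ω | B m ω i = b} = ⋃ v ∈ Finset.univ.filter (fun v : Fin n → Fin 2 => v i = b),
      B m ⁻¹' {v} := by
    ext ω
    simp only [Set.mem_setOf_eq, Set.mem_iUnion, Finset.mem_filter, Finset.mem_univ, true_and,
      Set.mem_preimage, Set.mem_singleton_iff]
    constructor
    · intro h; exact ⟨B m ω, h, rfl⟩
    · rintro ⟨v, hv, rfl⟩; exact hv
  rw [hset, measure_biUnion_finset]
  · have : ∀ v ∈ Finset.univ.filter (fun v : Fin n → Fin 2 => v i = b),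
        P (B m ⁻¹' {v}) = 1 / 2^n := by
      intro v _
      have : B m ⁻¹' {v} = {ω | B m ω = v} := rfl
      rw [this, hunif]
    rw [Finset.sum_congr rfl this, Finset.sum_const, card_fiber hn i b, nsmul_eq_mul]
    obtain ⟨p, rfl⟩ : ∃ p, n = p + 1 := ⟨n-1, by omega⟩
    have h2 : ((2:ℕ):ENNReal) ^ (p+1-1) * (1 / 2 ^ (p+1)) = 2⁻¹ := by
      have hc : ((2:ℕ):ENNReal) = 2 := by norm_num
      rw [hc, Nat.add_sub_cancel, pow_succ, one_div,
        ENNReal.mul_inv (Or.inl (by positivity)) (Or.inl (ENNReal.pow_ne_top (by norm_num))),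
        ← mul_assoc, ENNReal.mul_inv_cancel (by positivity) (ENNReal.pow_ne_top (by norm_num)),
        one_mul]
    simpa using h2
  · intro v hv w hw hvw
    apply Disjoint.preimage
    simp [Set.disjoint_singleton, hvw]
  · intro v _
    exact hmeas m (Set.Countable.measurableSet (Set.to_countable _))


lemma prob_bits (hn : 1 ≤ n) (hmeas : ∀ k, Measurable (B k))
    (hindep : iIndepFun B P)
    (hunif : ∀ k s, P {ω | B k ω = s} = 1 / 2 ^ n)
    (S : Finset ℤ) (i : Fin n) (g : ℤ → Fin 2) :
    P (⋂ m ∈ S, {ω | B m ω i = g m}) = 2⁻¹ ^ S.card := by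
  rw [iIndep.meas_biInter hindep (fun m _ => ?_)]
  · rw [Finset.prod_congr rfl (fun m _ => prob_bit P B hn hmeas hunif m i (g m)),
      Finset.prod_const]
  · exact ⟨{v | v i = g m}, (Set.to_countable _).measurableSet, rfl⟩

/-- probability that the random offset value `M` takes any given value is at most `2⁻¹ ^ k`. -/
lemma prob_M_eq (hn : 1 ≤ n) (hmeas : ∀ k, Measurable (B k))
    (hindep : iIndepFun B P)
    (hunif : ∀ k s, P {ω | B k ω = s} = 1 / 2 ^ n)
    (j : ℤ) (k : ℕ) (i : Fin n) (y : ℤ) :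
    P {ω | (∑ t ∈ Finset.range k, 2^t * ((B (j - t) ω i : ℕ) : ℤ)) = y} ≤ 2⁻¹ ^ k := by
  set Mf : Ω → ℤ := fun ω => ∑ t ∈ Finset.range k, 2^t * ((B (j - t) ω i : ℕ) : ℤ) with hMf
  rcases Set.eq_empty_or_nonempty {ω | Mf ω = y} with hE | ⟨ω0, hω0⟩
  · rw [hE]; simp
  · have hsub : {ω | Mf ω = y} ⊆
        ⋂ m ∈ (Finset.range k).image (fun t : ℕ => j - (t:ℤ)), {ω | B m ω i = B m ω0 i} := by
      intro ω hω
      simp only [Set.mem_setOf_eq] at hω hω0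
      simp only [Set.mem_iInter, Finset.mem_image, Finset.mem_range, Set.mem_setOf_eq]
      rintro m ⟨t, ht, rfl⟩
      have hnat : (∑ t ∈ Finset.range k, 2^t * ((B (j - t) ω i : ℕ)))
          = ∑ t ∈ Finset.range k, 2^t * ((B (j - t) ω0 i : ℕ)) := by
        have : ((∑ t ∈ Finset.range k, 2^t * ((B (j - t) ω i : ℕ)) : ℕ) : ℤ)
            = ((∑ t ∈ Finset.range k, 2^t * ((B (j - t) ω0 i : ℕ)) : ℕ) : ℤ) := by
          push_cast
          exact hω.trans hω0.symm
        exact_mod_cast this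
      have := bits_inj k (fun t => (B (j - t) ω i : ℕ)) (fun t => (B (j - t) ω0 i : ℕ))
        (fun t => Fin.is_le _) (fun t => Fin.is_le _) hnat t ht
      exact Fin.val_injective this
    calc P {ω | Mf ω = y} ≤ P (⋂ m ∈ (Finset.range k).image (fun t : ℕ => j - (t:ℤ)),
          {ω | B m ω i = B m ω0 i}) := measure_mono hsub
      _ = 2⁻¹ ^ ((Finset.range k).image (fun t : ℕ => j - (t:ℤ))).card :=
          prob_bits P B hn hmeas hindep hunif _ i _
      _ = 2⁻¹ ^ k := by
          rw [Finset.card_image_of_injective _ (fun a b hab => by omega), Finset.card_range]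

open Classical in
/-- per-coordinate, per-level probability bound -/
lemma prob_badres (hn : 1 ≤ n) (hmeas : ∀ k, Measurable (B k))
    (hindep : iIndepFun B P)
    (hunif : ∀ k s, P {ω | B k ω = s} = 1 / 2 ^ n)
    (γ : ℝ) (hγ : γ ∈ Set.Ioo (0:ℝ) 1)
    (j : ℤ) (qi : ℤ) (k : ℕ) (hk1 : 1 ≤ k) (i : Fin n) :
    P {ω | ((((qi - ∑ t ∈ Finset.range k, 2^t * ((B (j - t) ω i : ℕ) : ℤ)) % 2^k : ℤ) : ℝ)
          ≤ (2:ℝ)^((k:ℝ)*(1-γ)) ∨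
        (((2^k - 1 - (qi - ∑ t ∈ Finset.range k, 2^t * ((B (j - t) ω i : ℕ) : ℤ)) % 2^k : ℤ)) : ℝ)
          ≤ (2:ℝ)^((k:ℝ)*(1-γ)))}
      ≤ ENNReal.ofReal (4 * (2:ℝ)^(-(k:ℝ)*γ)) := by
  set T : ℝ := (2:ℝ)^((k:ℝ)*(1-γ)) with hT
  set Mf : Ω → ℤ := fun ω => ∑ t ∈ Finset.range k, 2^t * ((B (j - t) ω i : ℕ) : ℤ) with hMf
  have hMrange : ∀ ω, 0 ≤ Mf ω ∧ Mf ω < 2^k := by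
    intro ω
    have h1 : Mf ω = ((∑ t ∈ Finset.range k, 2^t * ((B (j - t) ω i : ℕ)) : ℕ) : ℤ) := by
      rw [hMf]; push_cast; rfl
    constructor
    · rw [h1]; positivity
    · rw [h1]
      have := sum_pow_lt k (fun t => (B (j - t) ω i : ℕ)) (fun t => Fin.is_le _)
      exact_mod_cast this
  have h2kpos : (0:ℤ) < 2^k := by positivity
  set Badp : ℤ → Prop := fun x => ((x : ℝ) ≤ T ∨ (((2^k - 1 - x : ℤ)) : ℝ) ≤ T) with hBadp
  set badF : Finset ℤ := (Finset.Ico (0:ℤ) (2^k)).filter Badp with hbadF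
  have hsub : {ω | Badp ((qi - Mf ω) % 2^k)}
      ⊆ ⋃ x ∈ badF, {ω | Mf ω = (qi - x) % 2^k} := by
    intro ω hω
    simp only [Set.mem_setOf_eq] at hω
    simp only [Set.mem_iUnion, hbadF, Finset.mem_filter, Finset.mem_Ico]
    refine ⟨(qi - Mf ω) % 2^k, ⟨⟨Int.emod_nonneg _ (by positivity), Int.emod_lt_of_pos _ h2kpos⟩, hω⟩, ?_⟩
    have hdecomp : qi - (qi - Mf ω) % 2^k = Mf ω + 2^k * ((qi - Mf ω) / 2^k) := by
      have := Int.emod_add_mul_ediv (qi - Mf ω) (2^k)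
      linarith
    rw [hdecomp, Int.add_mul_emod_self_left,
      Int.emod_eq_of_lt (hMrange ω).1 (hMrange ω).2]
    exact rfl
  have hTone : (1:ℝ) ≤ T := Real.one_le_rpow (by norm_num) (by
    have := hγ.2
    have : (0:ℝ) ≤ (k:ℝ) := by positivity
    nlinarith [hγ.2])
  have hcard : ((badF.card : ℝ)) ≤ 4 * T := by
    have hsub2 : badF ⊆ Finset.Ico (0:ℤ) (⌊T⌋ + 1) ∪ Finset.Ico (2^k - 1 - ⌊T⌋) (2^k) := by
      intro x hx
      simp only [hbadF, Finset.mem_filter, Finset.mem_Ico] at hx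
      obtain ⟨⟨hx0, hx1⟩, hbad⟩ := hx
      simp only [Finset.mem_union, Finset.mem_Ico]
      rcases hbad with h | h
      · exact Or.inl ⟨hx0, by have := Int.le_floor.mpr h; omega⟩
      · exact Or.inr ⟨by have := Int.le_floor.mpr h; omega, hx1⟩
    have h1 : badF.card ≤ (⌊T⌋ + 1).toNat + (2^k - (2^k - 1 - ⌊T⌋)).toNat := by
      calc badF.card ≤ _ := Finset.card_le_card hsub2
        _ ≤ _ := Finset.card_union_le _ _
        _ = _ := by rw [Int.card_Ico, Int.card_Ico]; norm_num
    have hfl0 : 0 ≤ ⌊T⌋ := Int.le_floor.mpr (by push_cast; linarith)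
    have hfl : (⌊T⌋ : ℝ) ≤ T := Int.floor_le T
    have h2 : ((⌊T⌋ + 1).toNat : ℝ) ≤ 2 * T := by
      have : ((⌊T⌋ + 1).toNat : ℝ) = ((⌊T⌋:ℝ) + 1) := by
        have : ((⌊T⌋ + 1).toNat : ℤ) = ⌊T⌋ + 1 := by omega
        exact_mod_cast this
      rw [this]; linarith
    have h3 : ((2^k - (2^k - 1 - ⌊T⌋)).toNat : ℝ) ≤ 2 * T := by
      have he : (2^k - (2^k - 1 - ⌊T⌋) : ℤ) = ⌊T⌋ + 1 := by ring
      rw [he]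
      have : ((⌊T⌋ + 1).toNat : ℝ) = ((⌊T⌋:ℝ) + 1) := by
        have : ((⌊T⌋ + 1).toNat : ℤ) = ⌊T⌋ + 1 := by omega
        exact_mod_cast this
      rw [this]; linarith
    calc ((badF.card : ℝ)) ≤ (((⌊T⌋ + 1).toNat + (2^k - (2^k - 1 - ⌊T⌋)).toNat : ℕ) : ℝ) := by
          exact_mod_cast h1
      _ = ((⌊T⌋ + 1).toNat : ℝ) + ((2^k - (2^k - 1 - ⌊T⌋)).toNat : ℝ) := by push_cast; ring
      _ ≤ 4 * T := by linarith
  calc P {ω | Badp ((qi - Mf ω) % 2^k)}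
      ≤ P (⋃ x ∈ badF, {ω | Mf ω = (qi - x) % 2^k}) := measure_mono hsub
    _ ≤ ∑ x ∈ badF, P {ω | Mf ω = (qi - x) % 2^k} := measure_biUnion_finset_le _ _
    _ ≤ ∑ _x ∈ badF, (2⁻¹:ENNReal)^k := Finset.sum_le_sum
        (fun x _ => prob_M_eq P B hn hmeas hindep hunif j k i _)
    _ = (badF.card : ENNReal) * 2⁻¹^k := by rw [Finset.sum_const, nsmul_eq_mul]
    _ ≤ ENNReal.ofReal (4 * T) * 2⁻¹^k := by
        apply mul_le_mul_left
        rw [← ENNReal.ofReal_natCast]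
        exact ENNReal.ofReal_le_ofReal hcard
    _ = ENNReal.ofReal (4 * T * (2⁻¹:ℝ)^k) := by
        rw [ENNReal.ofReal_mul (show (0:ℝ) ≤ 4*T by positivity)]
        congr 1
        rw [ENNReal.ofReal_pow (show (0:ℝ) ≤ 2⁻¹ by norm_num)]
        congr 1
        rw [ENNReal.ofReal_inv_of_pos (by norm_num)]
        simp
    _ = ENNReal.ofReal (4 * (2:ℝ)^(-(k:ℝ)*γ)) := by
        congr 1
        have hhalf : ((2⁻¹:ℝ))^k = (2:ℝ)^(-(k:ℝ)) := by
          rw [← Real.rpow_natCast (2⁻¹:ℝ) k, ← Real.rpow_neg_one (2:ℝ), ← Real.rpow_mul (by norm_num)]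
          congr 1
          ring
        rw [mul_assoc, hhalf, hT, ← Real.rpow_add (by norm_num)]
        congr 2
        ring
end Prob
end AuxLemmas

/-- with parameters `r ∈ ℤ₊` and `γ ∈ (0,1)`, the probability `π_bad` that a
randomly shifted dyadic cube `I+β` is bad satisfies `π_bad ≤ 4n·2^(-rγ)/(1-2^(-γ))`; in
particular, if `4n·2^(-rγ) < 1 - 2^(-γ)`, then `π_good = 1 - π_bad > 0`. -/
theorem statement1
    (n : ℕ) (hn : 1 ≤ n) (γ : ℝ) (hγ : γ ∈ Set.Ioo (0:ℝ) 1) (r : ℕ) (hr : 1 ≤ r)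
    {Ω : Type*} [MeasurableSpace Ω] (P : Measure Ω) [IsProbabilityMeasure P]
    (B : ℤ → Ω → (Fin n → Fin 2))
    (hmeas : ∀ k, Measurable (B k))
    (hindep : iIndepFun B P)
    (hunif : ∀ k s, P {ω | B k ω = s} = 1 / 2 ^ n)
    (j : ℤ) (q : Fin n → ℤ) :
    P {ω | BadCube r γ (fun i => B i ω) j q}
        ≤ ENNReal.ofReal (4 * (n:ℝ) * (2:ℝ) ^ (-(r:ℝ) * γ) / (1 - (2:ℝ) ^ (-γ))) ∧
    (4 * (n:ℝ) * (2:ℝ) ^ (-(r:ℝ) * γ) < 1 - (2:ℝ) ^ (-γ) →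
      0 < P {ω | ¬ BadCube r γ (fun i => B i ω) j q}) := by
  classical
  have hγ0 := hγ.1
  have hγ1 := hγ.2
  set E : ℕ → Set Ω := fun k => {ω | r ≤ k ∧ ∃ i : Fin n,
    ((((q i - ∑ t ∈ Finset.range k, 2^t * ((B (j - t) ω i : ℕ) : ℤ)) % 2^k : ℤ) : ℝ)
        ≤ (2:ℝ)^((k:ℝ)*(1-γ)) ∨
      (((2^k - 1 - (q i - ∑ t ∈ Finset.range k, 2^t * ((B (j - t) ω i : ℕ) : ℤ)) % 2^k : ℤ)) : ℝ)
        ≤ (2:ℝ)^((k:ℝ)*(1-γ)))} with hE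
  have h_incl : {ω | BadCube r γ (fun i => B i ω) j q} ⊆ ⋃ k : ℕ, E k := by
    intro ω hω
    obtain ⟨k, hk, q', hsub, hdist⟩ := hω
    refine Set.mem_iUnion.mpr ⟨k, hk, ?_⟩
    exact geom_step hn γ hγ (fun i => B i ω) j q k (le_trans hr hk) q' hsub hdist
  have h_Ek : ∀ k : ℕ, P (E k)
      ≤ ENNReal.ofReal (if r ≤ k then 4 * (n:ℝ) * (2:ℝ)^(-(k:ℝ)*γ) else 0) := by
    intro k
    by_cases hk : r ≤ k
    · rw [if_pos hk]
      have h1 : E k ⊆ ⋃ i : Fin n,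
          {ω | ((((q i - ∑ t ∈ Finset.range k, 2^t * ((B (j - t) ω i : ℕ) : ℤ)) % 2^k : ℤ) : ℝ)
              ≤ (2:ℝ)^((k:ℝ)*(1-γ)) ∨
            (((2^k - 1 - (q i - ∑ t ∈ Finset.range k, 2^t * ((B (j - t) ω i : ℕ) : ℤ)) % 2^k : ℤ)) : ℝ)
              ≤ (2:ℝ)^((k:ℝ)*(1-γ)))} := by
        intro ω hω
        exact Set.mem_iUnion.mpr hω.2
      calc P (E k) ≤ ∑' i : Fin n, P
            {ω | ((((q i - ∑ t ∈ Finset.range k, 2^t * ((B (j - t) ω i : ℕ) : ℤ)) % 2^k : ℤ) : ℝ)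
              ≤ (2:ℝ)^((k:ℝ)*(1-γ)) ∨
            (((2^k - 1 - (q i - ∑ t ∈ Finset.range k, 2^t * ((B (j - t) ω i : ℕ) : ℤ)) % 2^k : ℤ)) : ℝ)
              ≤ (2:ℝ)^((k:ℝ)*(1-γ)))} :=
          le_trans (measure_mono h1) (measure_iUnion_le _)
        _ ≤ ∑' _i : Fin n, ENNReal.ofReal (4 * (2:ℝ)^(-(k:ℝ)*γ)) :=
          ENNReal.tsum_le_tsum (fun i =>
            prob_badres P B hn hmeas hindep hunif γ hγ j (q i) k (le_trans hr hk) i)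
        _ = (n : ENNReal) * ENNReal.ofReal (4 * (2:ℝ)^(-(k:ℝ)*γ)) := by
            rw [tsum_fintype, Finset.sum_const, Finset.card_univ, Fintype.card_fin,
              nsmul_eq_mul]
        _ = ENNReal.ofReal (4 * (n:ℝ) * (2:ℝ)^(-(k:ℝ)*γ)) := by
            rw [← ENNReal.ofReal_natCast n, ← ENNReal.ofReal_mul (by positivity)]
            congr 1
            ring
    · rw [if_neg hk]
      have hempty : E k = ∅ := Set.eq_empty_iff_forall_notMem.mpr (fun ω hω => hk hω.1)
      rw [hempty]
      simp
  set ρ : ℝ := (2:ℝ)^(-γ) with hρ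
  have hρ0 : 0 ≤ ρ := by rw [hρ]; positivity
  have hρ1 : ρ < 1 := Real.rpow_lt_one_of_one_lt_of_neg (by norm_num) (by linarith)
  set C : ℝ := 4 * (n:ℝ) * (2:ℝ)^(-(r:ℝ)*γ) with hC
  have hCpos : 0 < C := by
    rw [hC]
    have : (0:ℝ) < (n:ℝ) := by exact_mod_cast hn
    positivity
  set g : ℕ → ℝ := fun k => if r ≤ k then 4 * (n:ℝ) * (2:ℝ)^(-(k:ℝ)*γ) else 0 with hg
  have hgnn : ∀ k, 0 ≤ g k := by
    intro k
    rw [hg]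
    dsimp only
    split
    · positivity
    · exact le_refl 0
  have hcomp : (fun t : ℕ => g (r + t)) = fun t : ℕ => C * ρ^t := by
    funext t
    rw [hg]
    dsimp only
    rw [if_pos (by omega)]
    rw [hC, hρ]
    have h1 : (((r + t : ℕ)):ℝ) = (r:ℝ) + (t:ℝ) := by push_cast; ring
    have h2 : ((2:ℝ)^(-γ))^t = (2:ℝ)^(-γ * (t:ℝ)) := by
      rw [← Real.rpow_natCast ((2:ℝ)^(-γ)) t, ← Real.rpow_mul (by norm_num)]
    have h3 : (2:ℝ)^(-((r:ℝ)+(t:ℝ))*γ) = (2:ℝ)^(-(r:ℝ)*γ) * (2:ℝ)^(-γ*(t:ℝ)) := by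
      rw [← Real.rpow_add (by norm_num : (0:ℝ) < 2)]
      congr 1
      ring
    rw [h1, h3, h2]
    ring
  have hinj : Function.Injective (fun t : ℕ => r + t) := fun a b h => by
    simp only [] at h
    omega
  have hsupp : Function.support g ⊆ Set.range (fun t : ℕ => r + t) := by
    intro k hk
    have : r ≤ k := by
      by_contra h
      exact hk (by rw [hg]; dsimp only; rw [if_neg h])
    exact ⟨k - r, by show r + (k - r) = k; omega⟩
  have hsummable : Summable g := by
    rw [← Function.Injective.summable_iff hinj (fun x hx => by
      by_contra hne
      exact hx (hsupp (by simpa using hne)))]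
    rw [show g ∘ (fun t : ℕ => r + t) = fun t : ℕ => g (r + t) from rfl, hcomp]
    exact (summable_geometric_of_lt_one hρ0 hρ1).mul_left C
  have htsum : ∑' k, g k = C * (1 - ρ)⁻¹ := by
    rw [← Function.Injective.tsum_eq hinj hsupp]
    rw [show (fun t : ℕ => g ((fun t : ℕ => r + t) t)) = fun t : ℕ => g (r + t) from rfl, hcomp]
    rw [tsum_mul_left, tsum_geometric_of_lt_one hρ0 hρ1]
  have part1 : P {ω | BadCube r γ (fun i => B i ω) j q}
      ≤ ENNReal.ofReal (4 * (n:ℝ) * (2:ℝ) ^ (-(r:ℝ) * γ) / (1 - (2:ℝ) ^ (-γ))) := by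
    calc P {ω | BadCube r γ (fun i => B i ω) j q} ≤ P (⋃ k : ℕ, E k) := measure_mono h_incl
      _ ≤ ∑' k : ℕ, P (E k) := measure_iUnion_le _
      _ ≤ ∑' k : ℕ, ENNReal.ofReal (g k) := ENNReal.tsum_le_tsum (fun k => h_Ek k)
      _ = ENNReal.ofReal (∑' k : ℕ, g k) := (ENNReal.ofReal_tsum_of_nonneg hgnn hsummable).symm
      _ = ENNReal.ofReal (4 * (n:ℝ) * (2:ℝ) ^ (-(r:ℝ) * γ) / (1 - (2:ℝ) ^ (-γ))) := by
          rw [htsum, hC, hρ, div_eq_mul_inv]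
  refine ⟨part1, ?_⟩
  intro hsmall
  by_contra h0
  push_neg at h0
  have h0' : P {ω | ¬ BadCube r γ (fun i => B i ω) j q} = 0 := le_antisymm h0 zero_le
  have hlt1 : ENNReal.ofReal (4 * (n:ℝ) * (2:ℝ) ^ (-(r:ℝ) * γ) / (1 - (2:ℝ) ^ (-γ))) < 1 := by
    rw [ENNReal.ofReal_lt_one]
    rw [div_lt_one (by linarith [hCpos, hsmall] : (0:ℝ) < 1 - (2:ℝ)^(-γ))]
    exact hsmall
  have huniv : (Set.univ : Set Ω) ⊆
      {ω | ¬ BadCube r γ (fun i => B i ω) j q} ∪ {ω | BadCube r γ (fun i => B i ω) j q} := by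
    intro ω _
    by_cases h : BadCube r γ (fun i => B i ω) j q
    · exact Or.inr h
    · exact Or.inl h
  have : (1:ENNReal) ≤ P {ω | BadCube r γ (fun i => B i ω) j q} := by
    calc (1:ENNReal) = P Set.univ := (measure_univ).symm
      _ ≤ P ({ω | ¬ BadCube r γ (fun i => B i ω) j q} ∪ {ω | BadCube r γ (fun i => B i ω) j q}) :=
          measure_mono huniv
      _ ≤ P {ω | ¬ BadCube r γ (fun i => B i ω) j q} + P {ω | BadCube r γ (fun i => B i ω) j q} :=
          measure_union_le _ _
      _ = P {ω | BadCube r γ (fun i => B i ω) j q} := by rw [h0', zero_add]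
  exact absurd (lt_of_le_of_lt (le_trans this part1) hlt1) (lt_irrefl _)

end
end

section
/- Let I, J be good cubes in a dyadic system D with ℓ(I) < ℓ(J), and suppose a(I) = a(J), where a(K) := log₂ℓ(K) mod (M+1) and M := max{r, ⌈(1−γ)^{-1} log₂⁺|m|⌉} for a fixed m ∈ ℤ^n. If I intersects J ∪ (J∔m) (where K∔m := K + ℓ(K)m), then both I and I∔m are contained in a single dyadic subcube K of J or of J∔m with ℓ(K) = ℓ(J)/2. Consequently any two distinct good cubes with equal values of a and of the alternating orbit-label b are m-compatible: either I∪(I∔m) and J∪(J∔m) are disjoint, or one of these unions is contained in a dyadic subcube of a cube from the other pair. -/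
open MeasureTheory Set ProbabilityTheory

noncomputable section

namespace Stmt4
variable {n : ℕ}

lemma mem_dyCube {j : ℤ} {q : Fin n → ℤ} {v x : Fin n → ℝ} :
    x ∈ dyCube j q v ↔ ∀ i, (q i : ℝ) ≤ (x i - v i) * (2:ℝ)^j ∧ (x i - v i) * (2:ℝ)^j < q i + 1 := by
  have hP : (0:ℝ) < (2:ℝ)^j := zpow_pos (by norm_num) j
  simp only [dyCube, Set.mem_pi, Set.mem_univ, Set.mem_Ico, forall_true_left]
  refine forall_congr' fun i => ?_
  rw [zpow_neg, ← div_le_iff₀ hP, ← lt_div_iff₀ hP, div_eq_inv_mul, div_eq_inv_mul,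
    le_sub_iff_add_le, sub_lt_iff_lt_add]

lemma mem_dyCube_floor {j : ℤ} {q : Fin n → ℤ} {v x : Fin n → ℝ} :
    x ∈ dyCube j q v ↔ ∀ i, ⌊(x i - v i) * (2:ℝ)^j⌋ = q i := by
  rw [mem_dyCube]
  refine forall_congr' fun i => ?_
  rw [Int.floor_eq_iff]


/-- position of x in the generation-j grid shifted by v -/
def posInt (j : ℤ) (v : Fin n → ℝ) (x : Fin n → ℝ) : Fin n → ℤ :=
  fun i => ⌊(x i - v i) * (2:ℝ)^j⌋

lemma mem_dyCube_posInt {j : ℤ} {q : Fin n → ℤ} {v x : Fin n → ℝ} :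
    x ∈ dyCube j q v ↔ ∀ i, posInt j v x i = q i := mem_dyCube_floor

lemma self_mem (j : ℤ) (v : Fin n → ℝ) (x : Fin n → ℝ) :
    x ∈ dyCube j (posInt j v x) v := mem_dyCube_posInt.2 fun _ => rfl

lemma eq_of_mem {j : ℤ} {q q' : Fin n → ℤ} {v x : Fin n → ℝ}
    (h : x ∈ dyCube j q v) (h' : x ∈ dyCube j q' v) : q = q' := by
  funext i
  rw [← mem_dyCube_posInt.1 h i, mem_dyCube_posInt.1 h' i]

lemma dyCube_disjoint {j : ℤ} {q q' : Fin n → ℤ} {v : Fin n → ℝ} (h : q ≠ q') :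
    Disjoint (dyCube j q v) (dyCube j q' v) := by
  rw [Set.disjoint_left]
  intro x hx hx'
  exact h (eq_of_mem hx hx')

lemma floor_const {a : ℤ} {N : ℕ} (hN : 0 < N) {t : ℝ}
    (h1 : (a:ℝ)/N ≤ t) (h2 : t < ((a:ℝ)+1)/N) : ⌊t⌋ = ⌊(a:ℝ)/(N:ℝ)⌋ := by
  have hNR : (0:ℝ) < N := by exact_mod_cast hN
  rw [Int.floor_eq_iff]
  refine ⟨le_trans (Int.floor_le _) h1, lt_of_lt_of_le h2 ?_⟩
  rw [div_le_iff₀ hNR]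
  have h3 : (a:ℝ) < (↑⌊(a:ℝ)/(N:ℝ)⌋ + 1) * N := by
    rw [← div_lt_iff₀ hNR]; exact Int.lt_floor_add_one _
  have h4 : a < (⌊(a:ℝ)/(N:ℝ)⌋ + 1) * (N:ℤ) := by exact_mod_cast h3
  have h5 : a + 1 ≤ (⌊(a:ℝ)/(N:ℝ)⌋ + 1) * (N:ℤ) := h4
  exact_mod_cast h5

lemma summable_shift (β : ℤ → Fin n → Fin 2) (j : ℤ) (i : Fin n) :
    Summable (fun k : ℤ => if j < k then (2:ℝ)^(-k) * ((β k i : ℕ) : ℝ) else 0) := by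
  set f : ℤ → ℝ := fun k => if j < k then (2:ℝ)^(-k) * ((β k i : ℕ) : ℝ) else 0 with hf
  have hinj : Function.Injective (fun p : ℕ => j + 1 + (p:ℤ)) := by
    intro a b h; simpa using h
  have hzero : ∀ x ∉ Set.range (fun p : ℕ => j + 1 + (p:ℤ)), f x = 0 := by
    intro x hx
    have : ¬ j < x := by
      intro hlt
      exact hx ⟨(x - j - 1).toNat, by simp; omega⟩
    simp [hf, this]
  rw [← hinj.summable_iff hzero]
  apply Summable.of_nonneg_of_le (f := fun p : ℕ => (2:ℝ)^(-(j+1)) * (1/2:ℝ)^p)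
  · intro p
    simp only [hf, Function.comp]
    positivity
  · intro p
    simp only [hf, Function.comp_apply, if_pos (by omega : j < j + 1 + (p:ℤ))]
    have hβ : ((β (j + 1 + (p:ℤ)) i : ℕ) : ℝ) ≤ 1 := by
      have := (β (j + 1 + (p:ℤ)) i).isLt
      exact_mod_cast Nat.lt_succ_iff.mp this
    have hpow : (2:ℝ)^(-(j + 1 + (p:ℤ))) = (2:ℝ)^(-(j+1)) * (1/2:ℝ)^p := by
      rw [neg_add, zpow_add₀ (by norm_num : (2:ℝ) ≠ 0)]
      congr 1
      rw [zpow_neg, zpow_natCast, one_div, inv_pow]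
    rw [hpow]
    have h1 : (0:ℝ) ≤ (2:ℝ)^(-(j+1)) * (1/2:ℝ)^p := by positivity
    nlinarith [hβ, h1]
  · exact Summable.mul_left _ (summable_geometric_of_lt_one (by norm_num) (by norm_num))

lemma shiftVec_diff {β : ℤ → Fin n → Fin 2} {j' j : ℤ} (h : j' ≤ j) (i : Fin n) :
    ∃ d : ℤ, shiftVec j' β i - shiftVec j β i = (d:ℝ) * (2:ℝ)^(-j) := by
  have hsum : shiftVec j' β i - shiftVec j β i
      = ∑ k ∈ Finset.Icc (j'+1) j, (2:ℝ)^(-k) * ((β k i : ℕ) : ℝ) := by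
    rw [shiftVec, shiftVec, ← Summable.tsum_sub (summable_shift β j' i) (summable_shift β j i)]
    rw [tsum_eq_sum (s := Finset.Icc (j'+1) j)]
    · apply Finset.sum_congr rfl
      intro k hk
      simp only [Finset.mem_Icc] at hk
      rw [if_pos (by omega), if_neg (by omega)]
      ring
    · intro k hk
      simp only [Finset.mem_Icc, not_and, not_le] at hk
      by_cases h1 : j < k
      · rw [if_pos (by omega), if_pos h1]; ring
      · rw [if_neg (by omega), if_neg h1]; ring
  refine ⟨∑ k ∈ Finset.Icc (j'+1) j, ((β k i : ℕ) : ℤ) * 2^((j-k).toNat), ?_⟩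
  rw [hsum]
  push_cast
  rw [Finset.sum_mul]
  apply Finset.sum_congr rfl
  intro k hk
  simp only [Finset.mem_Icc] at hk
  have h2 : ((2:ℝ)^((j-k).toNat) : ℝ) = (2:ℝ)^(j - k) := by
    rw [← zpow_natCast]
    congr 1
    omega
  rw [h2]
  have h3 : (2:ℝ)^(j - k) * (2:ℝ)^(-j) = (2:ℝ)^(-k) := by
    rw [← zpow_add₀ (by norm_num : (2:ℝ) ≠ 0)]
    congr 1
    omega
  rw [mul_assoc, h3]
  ring

lemma posInt_const {β : ℤ → Fin n → Fin 2} {j' j : ℤ} (h : j' ≤ j) {q : Fin n → ℤ}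
    {x y : Fin n → ℝ} (hx : x ∈ dyCube j q (shiftVec j β)) (hy : y ∈ dyCube j q (shiftVec j β)) :
    posInt j' (shiftVec j' β) x = posInt j' (shiftVec j' β) y := by
  funext i
  obtain ⟨d, hd⟩ := shiftVec_diff (β := β) h i
  set N : ℕ := 2^((j - j').toNat) with hN
  have hNpos : 0 < N := Nat.pow_pos (by norm_num)
  have hNR : ((N:ℕ):ℝ) = (2:ℝ)^(j - j') := by
    rw [hN]
    push_cast
    rw [← zpow_natCast]
    congr 1
    omega
  have key : ∀ z : Fin n → ℝ, z ∈ dyCube j q (shiftVec j β) →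
      ⌊(z i - shiftVec j' β i) * (2:ℝ)^j'⌋ = ⌊((q i - d : ℤ):ℝ)/(N:ℝ)⌋ := by
    intro z hz
    obtain ⟨hz1, hz2⟩ := mem_dyCube.1 hz i
    set u : ℝ := z i - shiftVec j β i with hu
    have hsv : z i - shiftVec j' β i = u - (d:ℝ) * (2:ℝ)^(-j) := by
      rw [hu]
      linarith [hd]
    have e1 : (2:ℝ)^(-j) * (2:ℝ)^(j') = (2:ℝ)^(j' - j) := by
      rw [← zpow_add₀ (by norm_num : (2:ℝ) ≠ 0)]
      congr 1
      omega
    have e2 : (2:ℝ)^j * (2:ℝ)^(j' - j) = (2:ℝ)^(j') := by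
      rw [← zpow_add₀ (by norm_num : (2:ℝ) ≠ 0)]
      congr 1
      omega
    have ht : (z i - shiftVec j' β i) * (2:ℝ)^j' = (u * (2:ℝ)^j - d) * (2:ℝ)^(j' - j) := by
      linear_combination (2:ℝ)^(j') * hsv + (-(d:ℝ)) * e1 + (-u) * e2
    have hNinv : ((N:ℝ))⁻¹ = (2:ℝ)^(j' - j) := by
      rw [hNR, ← zpow_neg]
      congr 1
      omega
    have hdiv : ∀ a : ℝ, a / (N:ℝ) = a * (2:ℝ)^(j' - j) := by
      intro a
      rw [div_eq_mul_inv, hNinv]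
    have hEpos : (0:ℝ) < (2:ℝ)^(j' - j) := zpow_pos (by norm_num) _
    apply floor_const hNpos
    · rw [hdiv, ht]
      push_cast
      apply mul_le_mul_of_nonneg_right _ hEpos.le
      linarith
    · rw [hdiv, ht]
      push_cast
      apply mul_lt_mul_of_pos_right _ hEpos
      linarith
  rw [posInt, posInt, key x hx, key y hy]

lemma dyCube_nonempty (j : ℤ) (q : Fin n → ℤ) (v : Fin n → ℝ) :
    (dyCube j q v).Nonempty := by
  refine ⟨fun i => (2:ℝ)^(-j) * q i + v i, mem_dyCube.2 fun i => ?_⟩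
  have hP : (0:ℝ) < (2:ℝ)^j := zpow_pos (by norm_num) j
  have : ((2:ℝ)^(-j) * q i + v i - v i) * (2:ℝ)^j = q i := by
    rw [zpow_neg]
    field_simp
    ring
  rw [this]
  exact ⟨le_rfl, by linarith⟩

lemma exists_parent {β : ℤ → Fin n → Fin 2} {j' j : ℤ} (h : j' ≤ j) (q : Fin n → ℤ) :
    ∃ p : Fin n → ℤ, dyCube j q (shiftVec j β) ⊆ dyCube j' p (shiftVec j' β) := by
  obtain ⟨x₀, hx₀⟩ := dyCube_nonempty j q (shiftVec j β)
  refine ⟨posInt j' (shiftVec j' β) x₀, fun y hy => ?_⟩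
  rw [mem_dyCube_posInt]
  intro i
  rw [posInt_const h hy hx₀]

lemma subset_of_inter {β : ℤ → Fin n → Fin 2} {j' j : ℤ} (h : j' ≤ j) {q p : Fin n → ℤ}
    (hne : (dyCube j q (shiftVec j β) ∩ dyCube j' p (shiftVec j' β)).Nonempty) :
    dyCube j q (shiftVec j β) ⊆ dyCube j' p (shiftVec j' β) := by
  obtain ⟨p', hp'⟩ := exists_parent (β := β) h q
  obtain ⟨x, hx1, hx2⟩ := hne
  have : p' = p := eq_of_mem (hp' hx1) hx2
  rwa [this] at hp'

lemma mem_translate {j : ℤ} {q : Fin n → ℤ} {m : Fin n → ℤ} {v y : Fin n → ℝ} :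
    y ∈ dyCube j (q + m) v ↔ (fun i => y i - (2:ℝ)^(-j) * m i) ∈ dyCube j q v := by
  rw [mem_dyCube_floor, mem_dyCube_floor]
  refine forall_congr' fun i => ?_
  have hP : (0:ℝ) < (2:ℝ)^j := zpow_pos (by norm_num) j
  have harg : (y i - (2:ℝ)^(-j) * m i - v i) * (2:ℝ)^j = (y i - v i) * (2:ℝ)^j - m i := by
    rw [zpow_neg]
    field_simp
    ring
  rw [harg, Int.floor_sub_intCast]
  simp only [Pi.add_apply]
  omega

lemma key {γ : ℝ} (hγ : γ ∈ Set.Ioo (0:ℝ) 1) {r : ℕ} (hr : 1 ≤ r)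
    (m : Fin n → ℤ) {M : ℕ}
    (hM : M = max r ⌈(1 - γ)⁻¹ * Real.logb 2 (max 1 ‖(fun i => (m i : ℝ))‖)⌉₊)
    (β : ℤ → Fin n → Fin 2) {jI jJ : ℤ} {qI : Fin n → ℤ}
    (hgood : ¬ BadCube r γ β jI qI) (hlt : jJ < jI) (hdvd : ((M : ℤ) + 1) ∣ jI - jJ) :
    ∃ q'' : Fin n → ℤ,
      dyCube jI qI (shiftVec jI β) ∪ dyCube jI (qI + m) (shiftVec jI β) ⊆
        dyCube (jJ + 1) q'' (shiftVec (jJ + 1) β) := by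
  obtain ⟨hγ0, hγ1⟩ := hγ
  set mR : Fin n → ℝ := fun i => (m i : ℝ) with hmR
  have h1 : (M:ℤ) + 1 ≤ jI - jJ := Int.le_of_dvd (by omega) hdvd
  set k : ℕ := (jI - jJ - 1).toNat with hk
  have hkz : (k:ℤ) = jI - jJ - 1 := Int.toNat_of_nonneg (by omega)
  have hrM : r ≤ M := hM ▸ le_max_left _ _
  have hkr : r ≤ k := by omega
  have hj' : jJ + 1 = jI - (k:ℤ) := by omega
  obtain ⟨q'', hsub⟩ := exists_parent (β := β) (show jJ + 1 ≤ jI by omega) qI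
  set I := dyCube jI qI (shiftVec jI β) with hI
  set K := dyCube (jJ + 1) q'' (shiftVec (jJ + 1) β) with hK
  set c' : ℝ := ((2:ℝ)^(-jI)) ^ γ * ((2:ℝ)^(-(jJ + 1))) ^ (1 - γ) with hc'
  have hc'pos : 0 < c' := by
    rw [hc']
    have p1 : (0:ℝ) < (2:ℝ)^(-jI) := zpow_pos (by norm_num) _
    have p2 : (0:ℝ) < (2:ℝ)^(-(jJ+1)) := zpow_pos (by norm_num) _
    positivity
  have hnle : ¬ (setDist I Kᶜ ≤ c') := by
    intro hle
    refine hgood ⟨k, hkr, q'', ?_, ?_⟩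
    · rw [← hj']; exact hsub
    · rw [← hj']; exact hle
  have hdist : c' < setDist I Kᶜ := not_le.1 hnle
  -- numeric bound
  have hnum : (2:ℝ)^(-jI) * ‖mR‖ ≤ c' := by
    have hb2 : (1:ℝ) < 2 := one_lt_two
    have hmax1 : (0:ℝ) < max 1 ‖mR‖ := lt_of_lt_of_le one_pos (le_max_left _ _)
    have hlogb : Real.logb 2 (max 1 ‖mR‖) ≤ (1 - γ) * M := by
      have h2 := Nat.le_ceil ((1 - γ)⁻¹ * Real.logb 2 (max 1 ‖mR‖))
      have hMge : (⌈(1 - γ)⁻¹ * Real.logb 2 (max 1 ‖mR‖)⌉₊ : ℝ) ≤ M := by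
        have : ⌈(1 - γ)⁻¹ * Real.logb 2 (max 1 ‖mR‖)⌉₊ ≤ M := hM ▸ le_max_right _ _
        exact_mod_cast this
      have h3 : (1 - γ)⁻¹ * Real.logb 2 (max 1 ‖mR‖) ≤ M := le_trans h2 hMge
      have h4 : (0:ℝ) < 1 - γ := by linarith
      have h5 : Real.logb 2 (max 1 ‖mR‖) = (1 - γ) * ((1 - γ)⁻¹ * Real.logb 2 (max 1 ‖mR‖)) := by
        field_simp
      rw [h5]
      exact mul_le_mul_of_nonneg_left h3 h4.le
    have hm2 : ‖mR‖ ≤ (2:ℝ) ^ ((1 - γ) * M) := by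
      calc ‖mR‖ ≤ max 1 ‖mR‖ := le_max_right _ _
        _ = (2:ℝ) ^ (Real.logb 2 (max 1 ‖mR‖)) := (Real.rpow_logb two_pos (by norm_num) hmax1).symm
        _ ≤ (2:ℝ) ^ ((1 - γ) * M) := Real.rpow_le_rpow_of_exponent_le hb2.le hlogb
    have ezI : (2:ℝ)^(-jI) = (2:ℝ) ^ ((-jI : ℤ) : ℝ) := (Real.rpow_intCast 2 (-jI)).symm
    have ezJ : (2:ℝ)^(-(jJ+1)) = (2:ℝ) ^ ((-(jJ+1) : ℤ) : ℝ) := (Real.rpow_intCast 2 (-(jJ+1))).symm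
    have e1 : c' = (2:ℝ) ^ (((-jI : ℤ) : ℝ) * γ + ((-(jJ+1) : ℤ) : ℝ) * (1 - γ)) := by
      rw [hc', ezI, ezJ, ← Real.rpow_mul (by norm_num), ← Real.rpow_mul (by norm_num),
        ← Real.rpow_add (by norm_num)]
    have hcR : (M:ℝ) + 1 ≤ (jI:ℝ) - (jJ:ℝ) := by exact_mod_cast h1
    have h4 : (0:ℝ) < 1 - γ := by linarith
    calc (2:ℝ)^(-jI) * ‖mR‖
        ≤ (2:ℝ) ^ ((-jI : ℤ) : ℝ) * (2:ℝ) ^ ((1 - γ) * M) := by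
          rw [← ezI]
          exact mul_le_mul_of_nonneg_left hm2 (zpow_pos (by norm_num) _).le
      _ = (2:ℝ) ^ (((-jI : ℤ) : ℝ) + (1 - γ) * M) := (Real.rpow_add (by norm_num) _ _).symm
      _ ≤ (2:ℝ) ^ (((-jI : ℤ) : ℝ) * γ + ((-(jJ+1) : ℤ) : ℝ) * (1 - γ)) := by
          apply Real.rpow_le_rpow_of_exponent_le hb2.le
          push_cast
          nlinarith [mul_le_mul_of_nonneg_left hcR h4.le]
      _ = c' := e1.symm
  -- ball argument
  have hmem : ∀ x ∈ I, ∀ y : Fin n → ℝ, dist x y ≤ c' → y ∈ K := by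
    intro x hx y hxy
    have hE : c' < (⨅ z ∈ I, EMetric.infEdist z Kᶜ).toReal := hdist
    set E := ⨅ z ∈ I, EMetric.infEdist z Kᶜ with hEdef
    have hEne : E ≠ ⊤ := by
      intro h
      rw [h] at hE
      simp only [ENNReal.toReal_top] at hE
      linarith
    have hE' : ENNReal.ofReal c' < E := (ENNReal.ofReal_lt_iff_lt_toReal hc'pos.le hEne).2 hE
    by_contra hy
    have h3 : EMetric.infEdist x Kᶜ ≤ edist x y := EMetric.infEdist_le_edist_of_mem hy
    have h4 : E ≤ EMetric.infEdist x Kᶜ := iInf₂_le x hx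
    have h5 : edist x y ≤ ENNReal.ofReal c' := by
      rw [edist_dist]
      exact ENNReal.ofReal_le_ofReal hxy
    exact absurd (le_trans h4 (le_trans h3 h5)) (not_le.2 hE')
  refine ⟨q'', ?_⟩
  rintro y (hy | hy)
  · exact hsub hy
  · have hxI : (fun i => y i - (2:ℝ)^(-jI) * m i) ∈ I := mem_translate.1 hy
    refine hmem _ hxI y (le_trans ?_ hnum)
    have hnn : (0:ℝ) ≤ (2:ℝ)^(-jI) * ‖mR‖ := by positivity
    rw [dist_pi_le_iff hnn]
    intro i
    rw [Real.dist_eq]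
    have harg : (y i - (2:ℝ)^(-jI) * m i) - y i = -((2:ℝ)^(-jI) * (m i : ℝ)) := by ring
    rw [harg, abs_neg, abs_mul, abs_of_pos (zpow_pos (by norm_num : (0:ℝ) < 2) (-jI))]
    apply mul_le_mul_of_nonneg_left _ (zpow_pos (by norm_num : (0:ℝ) < 2) (-jI)).le
    have hni := norm_le_pi_norm mR i
    simpa [hmR, Real.norm_eq_abs] using hni

end Stmt4

/-- two distinct good cubes `I, J` with equal values of the level-label
`a(K) = log₂ ℓ(K) mod (M+1)` and of the alternating orbit-label `b` are `m`-compatible.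
Moreover, if `ℓ(I) < ℓ(J)`, `a(I) = a(J)` and `I` meets `J ∪ (J∔m)`, then `I ∪ (I∔m)` is
contained in a single dyadic child `K` of `J` or of `J∔m`. -/
theorem statement4
    (n : ℕ) (hn : 1 ≤ n) (γ : ℝ) (hγ : γ ∈ Set.Ioo (0:ℝ) 1) (r : ℕ) (hr : 1 ≤ r)
    (m : Fin n → ℤ) (M : ℕ)
    (hM : M = max r ⌈(1 - γ)⁻¹ * Real.logb 2 (max 1 ‖(fun i => (m i : ℝ))‖)⌉₊)
    (β : ℤ → Fin n → Fin 2)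
    (b : ℤ → (Fin n → ℤ) → Fin 2) (hb : ∀ j q, b j (q + m) ≠ b j q)
    (jI jJ : ℤ) (qI qJ : Fin n → ℤ)
    (hgoodI : ¬ BadCube r γ β jI qI) (hgoodJ : ¬ BadCube r γ β jJ qJ)
    (ha : ((M : ℤ) + 1) ∣ jI - jJ) :
    -- first claim: a smaller good cube meeting `J ∪ (J∔m)` fits, together with its translate,
    -- inside a single dyadic child of `J` or of `J∔m`
    (jJ < jI →
      (dyCube jI qI (shiftVec jI β) ∩
        (dyCube jJ qJ (shiftVec jJ β) ∪ dyCube jJ (qJ + m) (shiftVec jJ β))).Nonempty →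
      ∃ q'' : Fin n → ℤ,
        (dyCube (jJ + 1) q'' (shiftVec (jJ + 1) β) ⊆ dyCube jJ qJ (shiftVec jJ β) ∨
         dyCube (jJ + 1) q'' (shiftVec (jJ + 1) β) ⊆ dyCube jJ (qJ + m) (shiftVec jJ β)) ∧
        dyCube jI qI (shiftVec jI β) ∪ dyCube jI (qI + m) (shiftVec jI β) ⊆
          dyCube (jJ + 1) q'' (shiftVec (jJ + 1) β)) ∧
    -- second claim: `m`-compatibility of distinct good cubes with equal labels
    ((jI, qI) ≠ (jJ, qJ) → b jI qI = b jJ qJ →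
      (Disjoint
          (dyCube jI qI (shiftVec jI β) ∪ dyCube jI (qI + m) (shiftVec jI β))
          (dyCube jJ qJ (shiftVec jJ β) ∪ dyCube jJ (qJ + m) (shiftVec jJ β)) ∨
       (∃ q'' : Fin n → ℤ,
        (dyCube (jJ + 1) q'' (shiftVec (jJ + 1) β) ⊆ dyCube jJ qJ (shiftVec jJ β) ∨
         dyCube (jJ + 1) q'' (shiftVec (jJ + 1) β) ⊆ dyCube jJ (qJ + m) (shiftVec jJ β)) ∧
        dyCube jI qI (shiftVec jI β) ∪ dyCube jI (qI + m) (shiftVec jI β) ⊆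
          dyCube (jJ + 1) q'' (shiftVec (jJ + 1) β)) ∨
       (∃ q'' : Fin n → ℤ,
        (dyCube (jI + 1) q'' (shiftVec (jI + 1) β) ⊆ dyCube jI qI (shiftVec jI β) ∨
         dyCube (jI + 1) q'' (shiftVec (jI + 1) β) ⊆ dyCube jI (qI + m) (shiftVec jI β)) ∧
        dyCube jJ qJ (shiftVec jJ β) ∪ dyCube jJ (qJ + m) (shiftVec jJ β) ⊆
          dyCube (jI + 1) q'' (shiftVec (jI + 1) β)))) := by
  constructor
  · -- first claim
    intro hlt hne
    obtain ⟨q'', hsub⟩ := Stmt4.key hγ hr m hM β hgoodI hlt ha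
    obtain ⟨z, hzI, hzJ⟩ := hne
    refine ⟨q'', ?_, hsub⟩
    have hzK : z ∈ dyCube (jJ + 1) q'' (shiftVec (jJ + 1) β) := hsub (Or.inl hzI)
    rcases hzJ with h | h
    · exact Or.inl (Stmt4.subset_of_inter (by omega) ⟨z, hzK, h⟩)
    · exact Or.inr (Stmt4.subset_of_inter (by omega) ⟨z, hzK, h⟩)
  · -- second claim
    intro hne hbeq
    rcases lt_trichotomy jI jJ with h | h | h
    · -- jI < jJ : roles swapped
      by_cases hd : Disjoint
          (dyCube jI qI (shiftVec jI β) ∪ dyCube jI (qI + m) (shiftVec jI β))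
          (dyCube jJ qJ (shiftVec jJ β) ∪ dyCube jJ (qJ + m) (shiftVec jJ β))
      · exact Or.inl hd
      refine Or.inr (Or.inr ?_)
      rw [Set.not_disjoint_iff_nonempty_inter] at hd
      obtain ⟨z, hz1, hz2⟩ := hd
      have hdvd' : ((M : ℤ) + 1) ∣ jJ - jI := by
        have := (dvd_neg (α := ℤ)).2 ha
        rwa [neg_sub] at this
      obtain ⟨q'', hsub⟩ := Stmt4.key hγ hr m hM β hgoodJ h hdvd'
      have hzK : z ∈ dyCube (jI + 1) q'' (shiftVec (jI + 1) β) := hsub hz2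
      refine ⟨q'', ?_, hsub⟩
      rcases hz1 with h' | h'
      · exact Or.inl (Stmt4.subset_of_inter (by omega) ⟨z, hzK, h'⟩)
      · exact Or.inr (Stmt4.subset_of_inter (by omega) ⟨z, hzK, h'⟩)
    · -- jI = jJ : disjoint
      left
      subst h
      have hq : qI ≠ qJ := fun hqq => hne (by rw [hqq])
      have h1 : qI + m ≠ qJ + m := fun hc => hq (by
        funext i
        have := congrFun hc i
        simpa using this)
      have h2 : qI ≠ qJ + m := by
        intro hc
        apply hb jI qJ
        rw [← hc, hbeq]
      have h3 : qI + m ≠ qJ := by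
        intro hc
        apply hb jI qI
        rw [hc, hbeq]
      rw [Set.disjoint_union_left]
      constructor <;> rw [Set.disjoint_union_right]
      · exact ⟨Stmt4.dyCube_disjoint hq, Stmt4.dyCube_disjoint h2⟩
      · exact ⟨Stmt4.dyCube_disjoint h3, Stmt4.dyCube_disjoint h1⟩
    · -- jJ < jI
      by_cases hd : Disjoint
          (dyCube jI qI (shiftVec jI β) ∪ dyCube jI (qI + m) (shiftVec jI β))
          (dyCube jJ qJ (shiftVec jJ β) ∪ dyCube jJ (qJ + m) (shiftVec jJ β))
      · exact Or.inl hd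
      refine Or.inr (Or.inl ?_)
      rw [Set.not_disjoint_iff_nonempty_inter] at hd
      obtain ⟨z, hz1, hz2⟩ := hd
      obtain ⟨q'', hsub⟩ := Stmt4.key hγ hr m hM β hgoodI h ha
      have hzK : z ∈ dyCube (jJ + 1) q'' (shiftVec (jJ + 1) β) := hsub hz1
      refine ⟨q'', ?_, hsub⟩
      rcases hz2 with h' | h'
      · exact Or.inl (Stmt4.subset_of_inter (by omega) ⟨z, hzK, h'⟩)
      · exact Or.inr (Stmt4.subset_of_inter (by omega) ⟨z, hzK, h'⟩)


end
end

section
/- Stein's inequality in UMD spaces: let X be a UMD space, p ∈ (1,∞), let (F_j)_{j=1}^N be an increasing sequence of σ-algebras with conditional expectations E_j, let f_1,…,f_N ∈ L^p(Ω;X), and let (ε_j) be independent symmetric ±1-valued random variables on another probability space. Then ‖Σ_j ε_j E_j f_j‖_{L^p} ≤ β_{p,X} ‖Σ_j ε_j f_j‖_{L^p}, where the L^p norms are over the product of the two probability spaces. -/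
open MeasureTheory Set ProbabilityTheory Filter
open scoped ENNReal NNReal Topology

noncomputable section

namespace Statement11Aux

lemma martingale_nat' {Ω X : Type*} [NormedAddCommGroup X] [NormedSpace ℝ X] [CompleteSpace X]
    {m0 : MeasurableSpace Ω} {μ : Measure Ω}
    [IsFiniteMeasure μ] {𝒢 : Filtration ℕ m0} {g : ℕ → Ω → X} (hadp : StronglyAdapted 𝒢 g)
    (hint : ∀ i, Integrable (g i) μ)
    (hstep : ∀ i, μ[g (i+1) | 𝒢 i] =ᵐ[μ] g i) : Martingale g 𝒢 μ := by
  refine ⟨hadp, fun i j hij => ?_⟩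
  induction j, hij using Nat.le_induction with
  | base =>
      rw [condExp_of_stronglyMeasurable (𝒢.le i) (hadp i) (hint i)]
  | succ j hij ih =>
      have h1 : μ[g (j+1) | 𝒢 i] =ᵐ[μ] μ[μ[g (j+1) | 𝒢 j] | 𝒢 i] :=
        (condExp_condExp_of_le (𝒢.mono hij) (𝒢.le j)).symm
      exact h1.trans ((condExp_congr_ae (hstep j)).trans ih)

lemma rect_smul_eval {Ω' Ω X : Type*} [NormedAddCommGroup X] [NormedSpace ℝ X]
    [MeasurableSpace Ω'] [MeasurableSpace Ω]
    (μ' : Measure Ω') (μ : Measure Ω) [SFinite μ'] [SFinite μ]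
    (φ : Ω' → ℝ) (c : Ω → X) (A : Set Ω') (B : Set Ω) :
    ∫ x in A ×ˢ B, φ x.1 • c x.2 ∂(μ'.prod μ)
      = (∫ x in A, φ x ∂μ') • ∫ y in B, c y ∂μ := by
  rw [← Measure.prod_restrict]
  exact integral_prod_smul φ c

lemma rect_zero {Ω' Ω X : Type*} [NormedAddCommGroup X] [NormedSpace ℝ X]
    {m₁ : MeasurableSpace Ω'} {m₂ : MeasurableSpace Ω}
    [mΩ' : MeasurableSpace Ω'] [mΩ : MeasurableSpace Ω]
    (μ' : Measure Ω') (μ : Measure Ω) [SFinite μ'] [SFinite μ]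
    (hm₁ : m₁ ≤ mΩ') (hm₂ : m₂ ≤ mΩ)
    {F : Ω' × Ω → X} (hF : Integrable F (μ'.prod μ))
    (hrect : ∀ A B, MeasurableSet[m₁] A → MeasurableSet[m₂] B →
        ∫ x in A ×ˢ B, F x ∂(μ'.prod μ) = 0)
    {S : Set (Ω' × Ω)} (hS : MeasurableSet[m₁.prod m₂] S) :
    ∫ x in S, F x ∂(μ'.prod μ) = 0 := by
  have hle : m₁.prod m₂ ≤ (Prod.instMeasurableSpace : MeasurableSpace (Ω' × Ω)) :=
    sup_le ((MeasurableSpace.comap_mono hm₁).trans le_sup_left)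
      ((MeasurableSpace.comap_mono hm₂).trans le_sup_right)
  have htot : ∫ x, F x ∂(μ'.prod μ) = 0 := by
    have h := hrect univ univ MeasurableSet.univ MeasurableSet.univ
    rwa [Set.univ_prod_univ, Measure.restrict_univ] at h
  revert hS
  refine fun hS => MeasurableSpace.induction_on_inter (m := m₁.prod m₂)
    (C := fun S _ => ∫ x in S, F x ∂(μ'.prod μ) = 0)
    (@generateFrom_prod Ω' Ω m₁ m₂).symm (@isPiSystem_prod Ω' Ω m₁ m₂) ?_ ?_ ?_ ?_ _ hS
  · simp
  · rintro _ ⟨A, hA, B, hB, rfl⟩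
    exact hrect A B hA hB
  · intro t htm h0
    have htm' : MeasurableSet t := hle _ htm
    have hadd := integral_add_compl htm' hF
    rw [h0, zero_add, htot] at hadd
    exact hadd
  · intro s hdisj hmeas h0s
    rw [integral_iUnion (fun i => hle _ (hmeas i)) hdisj hF.integrableOn]
    simp [h0s]

lemma sum_even_transform {Y : Type*} [AddCommMonoid Y] [Module ℝ Y] (N : ℕ) (d : ℕ → Y) :
    ∑ k ∈ Finset.range (2*N+1), (if Even k ∧ k < 2*N then (2:ℝ) else 0) • d k
      = (2:ℝ) • ∑ j ∈ Finset.range N, d (2*j) := by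
  induction N with
  | zero => simp
  | succ n ih =>
      have h1 : 2*(n+1)+1 = ((2*n+1) + 1) + 1 := by ring
      have h2 : ∀ k, k < 2*n → ((if Even k ∧ k < 2*(n+1) then (2:ℝ) else 0) • d k
          = (if Even k ∧ k < 2*n then (2:ℝ) else 0) • d k) := by
        intro k hk
        have hk1 : k < 2*(n+1) := by omega
        by_cases he : Even k <;> simp [he, hk, hk1]
      rw [h1, Finset.sum_range_succ, Finset.sum_range_succ, Finset.sum_range_succ]
      have hodd : ¬ Even (2*n+1) := by simp [Nat.even_add_one]
      have hlast : ¬ ((2*n+1)+1 < 2*(n+1)) := by omega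
      rw [Finset.sum_congr rfl (fun k hk => h2 k (Finset.mem_range.1 hk))]
      have hmid : (if Even (2*n) ∧ 2*n < 2*(n+1) then (2:ℝ) else 0) • d (2*n)
          = (2:ℝ) • d (2*n) := by
        have h3 : Even (2*n) := even_two_mul n
        have h4 : 2*n < 2*(n+1) := by omega
        simp [h3, h4]
      have hsum : ∑ k ∈ Finset.range (2*n), (if Even k ∧ k < 2*n then (2:ℝ) else 0) • d k
          = (2:ℝ) • ∑ j ∈ Finset.range n, d (2*j) := by
        have h5 := ih
        rw [Finset.sum_range_succ] at h5
        have hzero : (if Even (2*n) ∧ 2*n < 2*n then (2:ℝ) else 0) • d (2*n) = 0 := by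
          simp
        rw [hzero, add_zero] at h5
        exact h5
      rw [hsum, hmid]
      simp only [hodd, false_and, if_false, hlast, and_false, zero_smul, add_zero]
      rw [Finset.sum_range_succ (f := fun j => d (2*j)), smul_add]


lemma setIntegral_eps_zero {Ω' : Type*} [mΩ' : MeasurableSpace Ω'] {μ' : Measure Ω'}
    [IsProbabilityMeasure μ'] {ε : ℕ → Ω' → ℝ} (hεmeas : ∀ j, Measurable (ε j))
    (hεval : ∀ j ω', ε j ω' = 1 ∨ ε j ω' = -1)
    (hεsym : ∀ j, μ' {ω' | ε j ω' = 1} = 1/2)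
    (hεindep : iIndepFun ε μ') (j : ℕ) {A : Set Ω'}
    (hA : MeasurableSet[⨆ (i : ℕ) (_ : i < j), MeasurableSpace.comap (ε i) inferInstance] A) :
    ∫ x in A, ε j x ∂μ' = 0 := by
  classical
  set E : Set Ω' := ε j ⁻¹' {1} with hE
  have hEamb : MeasurableSet E := (hεmeas j) (measurableSet_singleton 1)
  have hle : (⨆ (i : ℕ) (_ : i < j), MeasurableSpace.comap (ε i) inferInstance) ≤ mΩ' :=
    iSup₂_le fun i _ => (hεmeas i).comap_le
  have hAamb : MeasurableSet A := hle _ hA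
  -- independence
  have hiIndep : iIndep (fun i => MeasurableSpace.comap (ε i) inferInstance) μ' :=
    (iIndepFun_iff_iIndep _ _ _).1 hεindep
  have hindep : Indep (⨆ (i : ℕ) (_ : i ∈ {i : ℕ | i < j}), MeasurableSpace.comap (ε i) inferInstance)
      (⨆ (i : ℕ) (_ : i ∈ ({j} : Set ℕ)), MeasurableSpace.comap (ε i) inferInstance) μ' :=
    indep_iSup_of_disjoint (fun i => (hεmeas i).comap_le) hiIndep
      (by simp only [Set.disjoint_left, Set.mem_setOf_eq, Set.mem_singleton_iff]; omega)
  have hindep' : Indep (⨆ (i : ℕ) (_ : i < j), MeasurableSpace.comap (ε i) inferInstance)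
      (MeasurableSpace.comap (ε j) inferInstance) μ' := by
    simpa [iSup_singleton] using hindep
  have hmul : ∀ {t : Set Ω'}, MeasurableSet[MeasurableSpace.comap (ε j) inferInstance] t →
      μ' (A ∩ t) = μ' A * μ' t := by
    intro t ht
    exact (Indep_iff _ _ _).1 hindep' A t hA ht
  have hEhalf : μ' E = 1/2 := by
    rw [← hεsym j]
    rfl
  have hEc : ε j ⁻¹' {-1} = Eᶜ := by
    ext ω'
    have h11 : (1:ℝ) ≠ -1 := by norm_num
    have h11' : (-1:ℝ) ≠ 1 := by norm_num
    rcases hεval j ω' with h | h <;> simp [hE, h, h11, h11']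
  have hEchalf : μ' Eᶜ = 1/2 := by
    rw [prob_compl_eq_one_sub hEamb, hEhalf, one_div, ENNReal.one_sub_inv_two]
  have hmulE : μ' (A ∩ E) = μ' A * (1/2) := by
    rw [hmul ⟨{1}, measurableSet_singleton 1, rfl⟩, hEhalf]
  have hmulEc : μ' (A ∩ Eᶜ) = μ' A * (1/2) := by
    rw [← hEc, hmul ⟨{-1}, measurableSet_singleton (-1), rfl⟩, hEc, hEchalf]
  have hdecomp : ∀ ω', ε j ω' = E.indicator (fun _ => (1:ℝ)) ω'
      - Eᶜ.indicator (fun _ => (1:ℝ)) ω' := by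
    intro ω'
    rcases hεval j ω' with h | h
    · have hmem : ω' ∈ E := by simp [hE, h]
      simp [h, indicator_of_mem hmem, indicator_of_notMem (by simpa using hmem : ω' ∉ Eᶜ)]
    · have hmem : ω' ∉ E := by simp [hE, h]; norm_num
      simp [h, indicator_of_notMem hmem, indicator_of_mem (by simpa using hmem : ω' ∈ Eᶜ)]
  calc ∫ x in A, ε j x ∂μ'
      = ∫ x in A, (E.indicator (fun _ => (1:ℝ)) x - Eᶜ.indicator (fun _ => (1:ℝ)) x) ∂μ' := by
        exact integral_congr_ae (ae_of_all _ fun x => hdecomp x)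
    _ = (∫ x in A, E.indicator (fun _ => (1:ℝ)) x ∂μ')
        - ∫ x in A, Eᶜ.indicator (fun _ => (1:ℝ)) x ∂μ' := by
        exact integral_sub ((integrable_const (1:ℝ)).indicator hEamb).integrableOn
          ((integrable_const (1:ℝ)).indicator hEamb.compl).integrableOn
    _ = (μ' (A ∩ E)).toReal - (μ' (A ∩ Eᶜ)).toReal := by
        rw [setIntegral_indicator hEamb, setIntegral_indicator hEamb.compl,
          setIntegral_const, setIntegral_const]
        simp
        rfl
    _ = 0 := by rw [hmulE, hmulEc, sub_self]


lemma exists_encode {α : Type*} {X : Type*} [NormedAddCommGroup X] [CompleteSpace X]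
    {m : MeasurableSpace α} {c : α → X} (hc : StronglyMeasurable[m] c) :
    ∃ (e : α → ℕ → ℝ) (ψ : (ℕ → ℝ) → X),
      (∀ n, Measurable[m] (fun ω => e ω n)) ∧ StronglyMeasurable ψ ∧ ∀ ω, ψ (e ω) = c ω := by
  classical
  haveI : Nonempty X := ⟨0⟩
  set φ : ℕ → @SimpleFunc α m X := fun n => hc.approx n with hφ
  set L : ℕ → List X := fun n => (φ n).range.toList with hL
  set e : α → ℕ → ℝ := fun ω n => ((L n).idxOf (φ n ω) : ℝ) with he
  set u : ℕ → (ℕ → ℝ) → X := fun n s => (L n).getD ⌊s n⌋₊ 0 with hu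
  have hu_meas : ∀ n, StronglyMeasurable (u n) := by
    intro n
    have hfib : ∀ x : X, MeasurableSet (u n ⁻¹' {x}) := by
      intro x
      exact ((Nat.measurable_floor).comp (measurable_pi_apply n))
        (show MeasurableSet ((fun k => (L n).getD k 0) ⁻¹' {x}) from trivial)
    have hfin : (Set.range (u n)).Finite := by
      apply (Set.Finite.insert (0:X) (L n).finite_toSet).subset
      rintro _ ⟨s, rfl⟩
      by_cases h : ⌊s n⌋₊ < (L n).length
      · right
        rw [hu]
        simp only
        rw [List.getD_eq_getElem _ _ h]
        exact List.getElem_mem _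
      · left
        rw [hu]
        simp only
        rw [List.getD_eq_default _ _ (not_lt.1 h)]
    exact (MeasureTheory.SimpleFunc.mk (u n) hfib hfin).stronglyMeasurable
  have hdec : ∀ n ω, u n (e ω) = φ n ω := by
    intro n ω
    have hmem : φ n ω ∈ L n := by
      rw [hL]
      simp only [Finset.mem_toList]
      exact SimpleFunc.mem_range_self _ _
    have hlt : (L n).idxOf (φ n ω) < (L n).length := List.idxOf_lt_length_iff.2 hmem
    rw [hu, he]
    simp only [Nat.floor_natCast]
    rw [List.getD_eq_getElem _ _ hlt]
    exact List.getElem_idxOf hlt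
  -- the convergence set
  set T : Set (ℕ → ℝ) := {s | CauchySeq (fun n => u n s)} with hT
  have hdist : ∀ i j : ℕ, Measurable (fun s => dist (u i s) (u j s)) := by
    intro i j
    exact ((hu_meas i).dist (hu_meas j)).measurable
  have hTmeas : MeasurableSet T := by
    have : T = ⋂ k : ℕ, ⋃ M : ℕ, ⋂ i : ℕ, ⋂ (_ : M ≤ i),
        {s | dist (u i s) (u M s) < 1/(k+1)} := by
      ext s
      simp only [mem_iInter, mem_iUnion, mem_setOf_eq, hT]
      constructor
      · intro hcs k
        rcases Metric.cauchySeq_iff'.1 hcs (1/(k+1)) (by positivity) with ⟨M, hM⟩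
        exact ⟨M, fun i hi => hM i hi⟩
      · intro h
        rw [Metric.cauchySeq_iff']
        intro δ hδ
        rcases exists_nat_one_div_lt hδ with ⟨k, hk⟩
        rcases h k with ⟨M, hM⟩
        exact ⟨M, fun i hi => lt_trans (hM i hi) hk⟩
    rw [this]
    refine MeasurableSet.iInter fun k => MeasurableSet.iUnion fun M =>
      MeasurableSet.iInter fun i => MeasurableSet.iInter fun _ => ?_
    exact measurableSet_lt (hdist i M) measurable_const
  set v : ℕ → (ℕ → ℝ) → X := fun n => T.indicator (u n) with hv
  set ψ : (ℕ → ℝ) → X := fun s => limUnder atTop (fun n => v n s) with hψ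
  have htend : ∀ s, Tendsto (fun n => v n s) atTop (𝓝 (ψ s)) := by
    intro s
    apply tendsto_nhds_limUnder
    by_cases hs : s ∈ T
    · have : CauchySeq (fun n => u n s) := hs
      rcases cauchySeq_tendsto_of_complete this with ⟨l, hl⟩
      refine ⟨l, ?_⟩
      have : (fun n => v n s) = fun n => u n s := by
        funext n; rw [hv]; simp [indicator_of_mem hs]
      rw [this]; exact hl
    · refine ⟨0, ?_⟩
      have : (fun n => v n s) = fun _ => (0:X) := by
        funext n; rw [hv]; simp [indicator_of_notMem hs]
      rw [this]; exact tendsto_const_nhds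
  refine ⟨e, ψ, ?_, ?_, ?_⟩
  · intro n
    have : (fun ω => e ω n) = fun ω => ((((φ n).map
        (fun x => (L n).idxOf x)) ω : ℕ) : ℝ) := rfl
    rw [this]
    exact measurable_from_top.comp ((φ n).map _).measurable
  · exact stronglyMeasurable_of_tendsto atTop (fun n => (hu_meas n).indicator hTmeas)
      (tendsto_pi_nhds.2 htend)
  · intro ω
    have h1 : Tendsto (fun n => u n (e ω)) atTop (𝓝 (c ω)) := by
      have : (fun n => u n (e ω)) = fun n => φ n ω := funext fun n => hdec n ω
      rw [this]
      exact hc.tendsto_approx ω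
    have hmemT : e ω ∈ T := h1.cauchySeq
    have h2 : Tendsto (fun n => v n (e ω)) atTop (𝓝 (c ω)) := by
      have : (fun n => v n (e ω)) = fun n => u n (e ω) := by
        funext n; rw [hv]; simp [indicator_of_mem hmemT]
      rw [this]; exact h1
    exact tendsto_nhds_unique (htend (e ω)) h2

end Statement11Aux

/-- Stein's inequality in UMD spaces: if `βc` is a UMD constant of `X` for
exponent `p` (unconditionality of martingale differences over arbitrary probability spaces),
`(ℱ_j)` is a filtration on a probability space `(Ω, μ)`, `f_1, …, f_N ∈ L^p(Ω; X)`, and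
`(ε_j)` are independent symmetric `±1`-valued random variables on another probability space
`(Ω', μ')`, then `‖Σ_j ε_j E_j f_j‖_p ≤ βc ‖Σ_j ε_j f_j‖_p`, the norms being taken in
`L^p(Ω' × Ω; X)`. -/
theorem statement11
    {X : Type*} [NormedAddCommGroup X] [NormedSpace ℝ X] [CompleteSpace X]
    (p : ℝ≥0∞) (hp : 1 < p) (hp' : p ≠ ⊤)
    (βc : ℝ) (hβpos : 0 < βc)
    -- `βc` is a UMD constant of `X`: unconditionality of martingale differences in `L^p`
    (hβ : ∀ (Ω₀ : Type) [MeasurableSpace Ω₀], ∀ (ν : Measure Ω₀) [IsProbabilityMeasure ν]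
        (𝒢 : Filtration ℕ (by infer_instance : MeasurableSpace Ω₀))
        (g : ℕ → Ω₀ → X), Martingale g 𝒢 ν →
        ∀ (σ : ℕ → ℝ), (∀ k, σ k = 1 ∨ σ k = -1) → ∀ N : ℕ,
        eLpNorm (∑ k ∈ Finset.range N, σ k • (g (k+1) - g k)) p ν
          ≤ ENNReal.ofReal βc * eLpNorm (∑ k ∈ Finset.range N, (g (k+1) - g k)) p ν)
    {Ω : Type*} [MeasurableSpace Ω] (μ : Measure Ω) [IsProbabilityMeasure μ]
    (ℱ : Filtration ℕ (inferInstance : MeasurableSpace Ω))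
    (f : ℕ → Ω → X) (hf : ∀ j, MemLp (f j) p μ)
    {Ω' : Type*} [MeasurableSpace Ω'] (μ' : Measure Ω') [IsProbabilityMeasure μ']
    (ε : ℕ → Ω' → ℝ) (hεmeas : ∀ j, Measurable (ε j))
    (hεval : ∀ j ω', ε j ω' = 1 ∨ ε j ω' = -1)
    (hεsym : ∀ j, μ' {ω' | ε j ω' = 1} = 1/2)
    (hεindep : iIndepFun ε μ')
    (N : ℕ) :
    eLpNorm (fun ω : Ω' × Ω =>
        ∑ j ∈ Finset.range N, ε j ω.1 • (μ[f j | ℱ j]) ω.2) p (μ'.prod μ)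
      ≤ ENNReal.ofReal βc *
        eLpNorm (fun ω : Ω' × Ω =>
          ∑ j ∈ Finset.range N, ε j ω.1 • f j ω.2) p (μ'.prod μ) := by
  classical
  have hp1 : (1:ℝ≥0∞) ≤ p := hp.le
  have hfi : ∀ i, Integrable (f i) μ := fun i => (hf i).integrable hp1
  set C : ℕ → ℕ → Ω → X := fun i j => μ[f i | ℱ j] with hCdef
  have hCsm : ∀ i j, StronglyMeasurable[ℱ j] (C i j) := fun i j => stronglyMeasurable_condExp
  have hCint : ∀ i j, Integrable (C i j) μ := fun i j => integrable_condExp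
  have hfsm' : ∀ i, ∃ g : Ω → X, StronglyMeasurable g ∧ f i =ᵐ[μ] g := fun i =>
    ⟨(hf i).1.mk (f i), (hf i).1.stronglyMeasurable_mk, (hf i).1.ae_eq_mk⟩
  choose f' hf'sm hf'ae using hfsm'
  have hf'int : ∀ i, Integrable (f' i) μ := fun i => (hfi i).congr (hf'ae i)
  choose eC ψC heCmeas hψCsm hψCdec using
    fun q : ℕ × ℕ => Statement11Aux.exists_encode (hCsm q.1 q.2)
  choose ef ψf hefmeas hψfsm hψfdec using fun i : ℕ =>
    Statement11Aux.exists_encode (m := (inferInstance : MeasurableSpace Ω)) (hf'sm i)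
  -- coordinate codes
  set cE : ℕ → ℕ := fun i => Nat.pair 0 i with hcE
  set cC : ℕ → ℕ → ℕ → ℕ := fun i j n => Nat.pair 1 (Nat.pair (Nat.pair i j) n) with hcC
  set cF : ℕ → ℕ → ℕ := fun i n => Nat.pair 2 (Nat.pair i n) with hcF
  -- the factor map into the canonical space
  set Φ : Ω' × Ω → (ℕ → ℝ) := fun x l =>
    if l.unpair.1 = 0 then ε l.unpair.2 x.1
    else if l.unpair.1 = 1 then
      eC (l.unpair.2.unpair.1.unpair.1, l.unpair.2.unpair.1.unpair.2) x.2 l.unpair.2.unpair.2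
    else if l.unpair.1 = 2 then ef l.unpair.2.unpair.1 x.2 l.unpair.2.unpair.2
    else 0 with hΦdef
  have hΦmeas : Measurable Φ := by
    apply measurable_pi_lambda
    intro l
    simp only [hΦdef]
    split_ifs with h1 h2 h3
    · exact (hεmeas _).comp measurable_fst
    · exact (((heCmeas (_, _) _).mono (ℱ.le _) le_rfl).comp measurable_snd)
    · exact ((hefmeas _ _).comp measurable_snd)
    · exact measurable_const
  have hΦE : ∀ (i : ℕ) (x : Ω' × Ω), Φ x (cE i) = ε i x.1 := by
    intro i x
    simp [hΦdef, hcE, Nat.unpair_pair]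
  have hΦC : ∀ (i j n : ℕ) (x : Ω' × Ω), Φ x (cC i j n) = eC (i, j) x.2 n := by
    intro i j n x
    simp [hΦdef, hcC, Nat.unpair_pair]
  have hΦF : ∀ (i n : ℕ) (x : Ω' × Ω), Φ x (cF i n) = ef i x.2 n := by
    intro i n x
    simp [hΦdef, hcF, Nat.unpair_pair]
  -- the image measure
  set ν : Measure (ℕ → ℝ) := (μ'.prod μ).map Φ with hνdef
  haveI hνprob : IsProbabilityMeasure ν := Measure.isProbabilityMeasure_map hΦmeas.aemeasurable
  -- downstairs random variables
  set EE : ℕ → (ℕ → ℝ) → ℝ := fun i s => s (cE i) with hEEdef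
  set Ψ : ℕ → ℕ → (ℕ → ℝ) → X := fun i j s => ψC (i, j) (fun n => s (cC i j n)) with hΨdef
  set ΨF : ℕ → (ℕ → ℝ) → X := fun i s => ψf i (fun n => s (cF i n)) with hΨFdef
  have hEEΦ : ∀ i x, EE i (Φ x) = ε i x.1 := fun i x => hΦE i x
  have hΨΦ : ∀ i j x, Ψ i j (Φ x) = C i j x.2 := by
    intro i j x
    have h1 : (fun n => Φ x (cC i j n)) = eC (i, j) x.2 := funext fun n => hΦC i j n x
    rw [hΨdef]
    simp only
    rw [h1]
    exact hψCdec (i, j) x.2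
  have hΨFΦ : ∀ i x, ΨF i (Φ x) = f' i x.2 := by
    intro i x
    have h1 : (fun n => Φ x (cF i n)) = ef i x.2 := funext fun n => hΦF i n x
    rw [hΨFdef]
    simp only
    rw [h1]
    exact hψfdec i x.2
  -- index bookkeeping
  set a : ℕ → ℕ := fun k => min ((k+1)/2) N with hadef
  set b : ℕ → ℕ := fun k => min (k/2) N with hbdef
  have hamono : Monotone a := fun k l hkl => by
    simp only [hadef]
    exact min_le_min (Nat.div_le_div_right (by omega)) le_rfl
  have hbmono : Monotone b := fun k l hkl => by
    simp only [hbdef]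
    exact min_le_min (Nat.div_le_div_right (by omega)) le_rfl
  have haN : ∀ k, a k ≤ N := fun k => min_le_right _ _
  -- downstairs σ-algebras
  set mE : ℕ → MeasurableSpace (ℕ → ℝ) := fun i =>
    MeasurableSpace.comap (fun s => s (cE i)) inferInstance with hmEdef
  set mC : ℕ → ℕ → MeasurableSpace (ℕ → ℝ) := fun i j =>
    ⨆ n : ℕ, MeasurableSpace.comap (fun s => s (cC i j n)) inferInstance with hmCdef
  set mF : ℕ → MeasurableSpace (ℕ → ℝ) := fun i =>
    ⨆ n : ℕ, MeasurableSpace.comap (fun s => s (cF i n)) inferInstance with hmFdef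
  set G : ℕ → MeasurableSpace (ℕ → ℝ) := fun k =>
    (⨆ (i : ℕ) (_ : i < a k), mE i) ⊔ ((⨆ (i : ℕ) (_ : i < N), ⨆ (j : ℕ) (_ : j ≤ b k), mC i j)
      ⊔ (⨆ (i : ℕ) (_ : i < N), ⨆ (_ : 2*N < k), mF i)) with hGdef
  have hGle : ∀ k, G k ≤ (inferInstance : MeasurableSpace (ℕ → ℝ)) := by
    intro k
    refine sup_le ?_ (sup_le ?_ ?_)
    · exact iSup₂_le fun i _ => (measurable_pi_apply _).comap_le
    · exact iSup₂_le fun i _ => iSup₂_le fun j _ =>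
        iSup_le fun n => (measurable_pi_apply _).comap_le
    · exact iSup₂_le fun i _ => iSup_le fun _ =>
        iSup_le fun n => (measurable_pi_apply _).comap_le
  have hGmono : Monotone G := by
    intro k l hkl
    refine sup_le_sup ?_ (sup_le_sup ?_ ?_)
    · exact biSup_mono fun i hi => lt_of_lt_of_le hi (hamono hkl)
    · exact iSup₂_mono fun i _ => biSup_mono fun j hj => le_trans hj (hbmono hkl)
    · exact iSup₂_mono fun i _ => iSup_le fun h2 => le_iSup_of_le (by omega) le_rfl
  set 𝒢 : Filtration ℕ (inferInstance : MeasurableSpace (ℕ → ℝ)) :=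
    ⟨G, hGmono, hGle⟩ with h𝒢def
  -- downstairs martingale and its upstairs version
  set HH : (ℕ → ℝ) → X := fun s => ∑ i ∈ Finset.range N, EE i s • ΨF i s with hHHdef
  set g : ℕ → (ℕ → ℝ) → X := fun k => if 2*N < k then HH
    else fun s => ∑ i ∈ Finset.range (a k), EE i s • Ψ i (b k) s with hgdef
  set Hup : Ω' × Ω → X := fun x => ∑ i ∈ Finset.range N, ε i x.1 • f' i x.2 with hHupdef
  set gup : ℕ → Ω' × Ω → X := fun k => if 2*N < k then Hup
    else fun x => ∑ i ∈ Finset.range (a k), ε i x.1 • C i (b k) x.2 with hgupdef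
  have hcomp : ∀ k x, g k (Φ x) = gup k x := by
    intro k x
    by_cases h : 2*N < k
    · rw [hgdef, hgupdef]
      simp only [if_pos h, hHHdef, hHupdef]
      exact Finset.sum_congr rfl fun i _ => by rw [hEEΦ, hΨFΦ]
    · rw [hgdef, hgupdef]
      simp only [if_neg h]
      exact Finset.sum_congr rfl fun i _ => by rw [hEEΦ, hΨΦ]
  -- measurability downstairs
  have hEEmeas : ∀ i k, i < a k → Measurable[G k] (EE i) := by
    intro i k hi
    have h1 : Measurable[mE i] (EE i) := Measurable.of_comap_le le_rfl
    exact h1.mono (le_trans (le_iSup₂ (f := fun (i : ℕ) (_ : i < a k) => mE i) i hi)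
      le_sup_left) le_rfl
  have hΨsm : ∀ i j, StronglyMeasurable[mC i j] (Ψ i j) := by
    intro i j
    refine (hψCsm (i, j)).comp_measurable ?_
    refine @measurable_pi_lambda _ _ _ (mC i j) (fun _ => inferInstance) _ fun n => ?_
    exact Measurable.of_comap_le (le_iSup
      (fun n => MeasurableSpace.comap (fun s : ℕ → ℝ => s (cC i j n)) inferInstance) n)
  have hΨFsm : ∀ i, StronglyMeasurable[mF i] (ΨF i) := by
    intro i
    refine (hψfsm i).comp_measurable ?_
    refine @measurable_pi_lambda _ _ _ (mF i) (fun _ => inferInstance) _ fun n => ?_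
    exact Measurable.of_comap_le (le_iSup
      (fun n => MeasurableSpace.comap (fun s : ℕ → ℝ => s (cF i n)) inferInstance) n)
  have hmCleG : ∀ i j k, i < N → j ≤ b k → mC i j ≤ G k := by
    intro i j k hi hj
    refine le_trans ?_ (le_trans le_sup_left le_sup_right)
    exact le_iSup₂_of_le i hi (le_iSup₂_of_le j hj le_rfl)
  have hmFleG : ∀ i k, i < N → 2*N < k → mF i ≤ G k := by
    intro i k hi hk
    refine le_trans ?_ (le_trans le_sup_right le_sup_right)
    exact le_iSup₂_of_le i hi (le_iSup_of_le hk le_rfl)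
  have hadp : ∀ k, StronglyMeasurable[G k] (g k) := by
    intro k
    by_cases h : 2*N < k
    · simp only [hgdef, if_pos h, hHHdef]
      refine Finset.stronglyMeasurable_fun_sum _ fun i hi => ?_
      have hiN : i < N := Finset.mem_range.1 hi
      have hEi : Measurable[G k] (EE i) := hEEmeas i k (by
        have : a k = N := by simp only [hadef]; omega
        omega)
      exact (hEi.stronglyMeasurable).smul ((hΨFsm i).mono (hmFleG i k hiN h))
    · simp only [hgdef, if_neg h]
      refine Finset.stronglyMeasurable_fun_sum _ fun i hi => ?_
      have hia : i < a k := Finset.mem_range.1 hi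
      exact ((hEEmeas i k hia).stronglyMeasurable).smul
        ((hΨsm i (b k)).mono (hmCleG i (b k) k (lt_of_lt_of_le hia (haN k)) le_rfl))
  -- integrability
  have hεint : ∀ i, Integrable (ε i) μ' := by
    intro i
    refine (integrable_const (1:ℝ)).mono' (hεmeas i).aestronglyMeasurable ?_
    refine ae_of_all _ fun ω' => ?_
    rcases hεval i ω' with h | h <;> simp [h]
  have hupint : ∀ k, Integrable (gup k) (μ'.prod μ) := by
    intro k
    by_cases h : 2*N < k
    · simp only [hgupdef, if_pos h, hHupdef]
      exact integrable_finset_sum _ fun i _ => (hεint i).smul_prod (hf'int i)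
    · simp only [hgupdef, if_neg h]
      exact integrable_finset_sum _ fun i _ => (hεint i).smul_prod (hCint i (b k))
  have hgsm : ∀ k, AEStronglyMeasurable (g k) ν :=
    fun k => ((hadp k).mono (hGle k)).aestronglyMeasurable
  have hgint : ∀ k, Integrable (g k) ν := by
    intro k
    rw [hνdef]
    refine (integrable_map_measure (by rw [← hνdef]; exact hgsm k) hΦmeas.aemeasurable).2 ?_
    have h1 : (g k) ∘ Φ = gup k := funext (hcomp k)
    rw [h1]
    exact hupint k
  -- upstairs σ-algebras
  set e1 : ℕ → MeasurableSpace Ω' := fun j =>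
    ⨆ (i : ℕ) (_ : i < j), MeasurableSpace.comap (ε i) inferInstance with he1def
  have he1le : ∀ j, e1 j ≤ (inferInstance : MeasurableSpace Ω') :=
    fun j => iSup₂_le fun i _ => (hεmeas i).comap_le
  set m2 : ℕ → MeasurableSpace Ω := fun k =>
    if 2*N < k then (inferInstance : MeasurableSpace Ω)
    else (ℱ (b k) : MeasurableSpace Ω) with hm2def
  have hm2le : ∀ k, m2 k ≤ (inferInstance : MeasurableSpace Ω) := by
    intro k
    rw [hm2def]
    simp only
    split_ifs with h
    · exact le_rfl
    · exact ℱ.le (b k)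
  have hFlem2 : ∀ k, (ℱ (b k) : MeasurableSpace Ω) ≤ m2 k := by
    intro k
    rw [hm2def]
    simp only
    split_ifs with h
    · exact ℱ.le (b k)
    · exact le_rfl
  have hprodle1 : ∀ (m1 : MeasurableSpace Ω') (m2' : MeasurableSpace Ω),
      MeasurableSpace.comap Prod.fst m1 ≤ m1.prod m2' := fun _ _ => le_sup_left
  have hprodle2 : ∀ (m1 : MeasurableSpace Ω') (m2' : MeasurableSpace Ω),
      MeasurableSpace.comap Prod.snd m2' ≤ m1.prod m2' := fun _ _ => le_sup_right
  have hpull : ∀ k, MeasurableSpace.comap Φ (G k) ≤ (e1 (a k)).prod (m2 k) := by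
    intro k
    rw [hGdef]
    simp only
    rw [MeasurableSpace.comap_sup, MeasurableSpace.comap_sup]
    refine sup_le ?_ (sup_le ?_ ?_)
    · rw [MeasurableSpace.comap_iSup]
      refine iSup_le fun i => ?_
      rw [MeasurableSpace.comap_iSup]
      refine iSup_le fun hi => ?_
      rw [hmEdef]
      simp only
      rw [MeasurableSpace.comap_comp]
      have heq : ((fun s : ℕ → ℝ => s (cE i)) ∘ Φ) = (ε i) ∘ Prod.fst :=
        funext fun x => hΦE i x
      rw [heq, ← MeasurableSpace.comap_comp]
      refine le_trans (MeasurableSpace.comap_mono ?_) (hprodle1 _ _)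
      exact le_iSup₂_of_le i hi le_rfl
    · rw [MeasurableSpace.comap_iSup]
      refine iSup_le fun i => ?_
      rw [MeasurableSpace.comap_iSup]
      refine iSup_le fun hiN => ?_
      rw [MeasurableSpace.comap_iSup]
      refine iSup_le fun j => ?_
      rw [MeasurableSpace.comap_iSup]
      refine iSup_le fun hj => ?_
      rw [hmCdef]
      simp only
      rw [MeasurableSpace.comap_iSup]
      refine iSup_le fun n => ?_
      rw [MeasurableSpace.comap_comp]
      have heq : ((fun s : ℕ → ℝ => s (cC i j n)) ∘ Φ)
          = (fun ω => eC (i, j) ω n) ∘ Prod.snd := funext fun x => hΦC i j n x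
      rw [heq, ← MeasurableSpace.comap_comp]
      refine le_trans (MeasurableSpace.comap_mono ?_) (hprodle2 _ _)
      exact le_trans (measurable_iff_comap_le.1 (heCmeas (i, j) n))
        (le_trans (ℱ.mono hj) (hFlem2 k))
    · rw [MeasurableSpace.comap_iSup]
      refine iSup_le fun i => ?_
      rw [MeasurableSpace.comap_iSup]
      refine iSup_le fun hiN => ?_
      rw [MeasurableSpace.comap_iSup]
      refine iSup_le fun h2 => ?_
      rw [hmFdef]
      simp only
      rw [MeasurableSpace.comap_iSup]
      refine iSup_le fun n => ?_
      rw [MeasurableSpace.comap_comp]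
      have heq : ((fun s : ℕ → ℝ => s (cF i n)) ∘ Φ)
          = (fun ω => ef i ω n) ∘ Prod.snd := funext fun x => hΦF i n x
      rw [heq, ← MeasurableSpace.comap_comp]
      refine le_trans (MeasurableSpace.comap_mono ?_) (hprodle2 _ _)
      refine le_trans (hefmeas i n).comap_le ?_
      rw [hm2def]
      simp only
      rw [if_pos h2]
  have hpreim : ∀ k S, MeasurableSet[G k] S →
      MeasurableSet[(e1 (a k)).prod (m2 k)] (Φ ⁻¹' S) :=
    fun k S hS => hpull k _ ⟨S, hS, rfl⟩
  -- rectangle integral tools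
  have hrsmul : ∀ (φ : Ω' → ℝ) (c : Ω → X) (A : Set Ω') (B : Set Ω),
      ∫ x in A ×ˢ B, φ x.1 • c x.2 ∂(μ'.prod μ) = (∫ x in A, φ x ∂μ') • ∫ y in B, c y ∂μ :=
    fun φ c A B => Statement11Aux.rect_smul_eval μ' μ φ c A B
  have hrect_gen : ∀ (m : ℕ) (D : ℕ → Ω → X), (∀ i, Integrable (D i) μ) →
      ∀ (A : Set Ω') (B : Set Ω), (∀ i, i < m → ∫ y in B, D i y ∂μ = 0) →
      ∫ x in A ×ˢ B, (∑ i ∈ Finset.range m, ε i x.1 • D i x.2) ∂(μ'.prod μ) = 0 := by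
    intro m D hD A B hB0
    rw [integral_finset_sum _ (fun i _ => ((hεint i).smul_prod (hD i)).integrableOn)]
    refine Finset.sum_eq_zero fun i hi => ?_
    rw [hrsmul (ε i) (D i) A B, hB0 i (Finset.mem_range.1 hi), smul_zero]
  -- index arithmetic
  have hidx : ∀ j, j < N → a (2*j) = j ∧ b (2*j) = j ∧ a (2*j+1) = j+1 ∧ b (2*j+1) = j := by
    intro j hj
    refine ⟨?_, ?_, ?_, ?_⟩ <;> (simp only [hadef, hbdef]; omega)
  -- the key vanishing of set integrals of martingale increments
  have hstep0 : ∀ k S, MeasurableSet[G k] S →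
      ∫ x in Φ ⁻¹' S, (gup (k+1) x - gup k x) ∂(μ'.prod μ) = 0 := by
    intro k S hS
    have hSP := hpreim k S hS
    by_cases hk : 2*N < k
    · have hz : ∀ x : Ω' × Ω, gup (k+1) x - gup k x = 0 := by
        intro x
        rw [hgupdef]
        simp only [if_pos hk, if_pos (show 2*N < k+1 by omega), sub_self]
      calc ∫ x in Φ ⁻¹' S, (gup (k+1) x - gup k x) ∂(μ'.prod μ)
          = ∫ _x in Φ ⁻¹' S, (0:X) ∂(μ'.prod μ) :=
            integral_congr_ae (ae_of_all _ fun x => hz x)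
        _ = 0 := integral_zero _ _
    · refine Statement11Aux.rect_zero μ' μ (he1le (a k)) (hm2le k)
        ((hupint (k+1)).sub (hupint k)) ?_ hSP
      intro A B hA hB
      have hBamb : MeasurableSet B := hm2le k _ hB
      rcases Nat.even_or_odd k with hev | hodd
      · obtain ⟨j, hj⟩ := hev
        have hk2 : k = 2*j := by omega
        by_cases hjN : j < N
        · obtain ⟨ha2j, hb2j, ha2j1, hb2j1⟩ := hidx j hjN
          have hdiffeq : ∀ x : Ω' × Ω, gup (k+1) x - gup k x = ε j x.1 • C j j x.2 := by
            intro x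
            rw [hgupdef]
            simp only [if_neg (show ¬ 2*N < k+1 by omega), if_neg hk]
            rw [hk2, ha2j, hb2j]
            rw [show 2*j+1 = 2*j+1 from rfl, ha2j1, hb2j1]
            rw [Finset.sum_range_succ, add_sub_cancel_left]
          have hA' : MeasurableSet[⨆ (i : ℕ) (_ : i < j),
              MeasurableSpace.comap (ε i) inferInstance] A := by
            rw [hk2] at hA
            rw [ha2j] at hA
            exact hA
          calc ∫ x in A ×ˢ B, (gup (k+1) x - gup k x) ∂(μ'.prod μ)
              = ∫ x in A ×ˢ B, ε j x.1 • C j j x.2 ∂(μ'.prod μ) :=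
                integral_congr_ae (ae_of_all _ fun x => hdiffeq x)
            _ = (∫ x in A, ε j x ∂μ') • ∫ y in B, C j j y ∂μ := hrsmul _ _ _ _
            _ = 0 := by
                rw [Statement11Aux.setIntegral_eps_zero hεmeas hεval hεsym hεindep j hA',
                  zero_smul]
        · have hjN' : j = N := by omega
          have hkN : k = 2*N := by omega
          have ha2N : a k = N := by simp only [hadef]; omega
          have hb2N : b k = N := by simp only [hbdef]; omega
          have hdiffeq : ∀ x : Ω' × Ω, gup (k+1) x - gup k x
              = ∑ i ∈ Finset.range N, ε i x.1 • (f' i x.2 - C i N x.2) := by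
            intro x
            rw [hgupdef]
            simp only [if_pos (show 2*N < k+1 by omega), if_neg hk, hHupdef]
            rw [ha2N, hb2N, ← Finset.sum_sub_distrib]
            exact Finset.sum_congr rfl fun i _ => (smul_sub _ _ _).symm
          have hBF : MeasurableSet[ℱ N] B := by
            rw [hm2def] at hB
            change MeasurableSet[if 2*N < k then (inferInstance : MeasurableSpace Ω) else (ℱ (b k) : MeasurableSpace Ω)] B at hB; rw [if_neg hk] at hB
            rw [hb2N] at hB
            exact hB
          calc ∫ x in A ×ˢ B, (gup (k+1) x - gup k x) ∂(μ'.prod μ)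
              = ∫ x in A ×ˢ B, (∑ i ∈ Finset.range N,
                  ε i x.1 • (f' i x.2 - C i N x.2)) ∂(μ'.prod μ) :=
                integral_congr_ae (ae_of_all _ fun x => hdiffeq x)
            _ = 0 := by
                refine hrect_gen N (fun i => f' i - C i N)
                  (fun i => (hf'int i).sub (hCint i N)) A B ?_
                intro i _
                have h1 : ∫ y in B, C i N y ∂μ = ∫ y in B, f i y ∂μ :=
                  setIntegral_condExp (ℱ.le N) (hfi i) hBF
                have h2 : ∫ y in B, f' i y ∂μ = ∫ y in B, f i y ∂μ :=
                  integral_congr_ae (ae_restrict_of_ae (hf'ae i).symm)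
                have h3 : ∫ y in B, (f' i y - C i N y) ∂μ
                    = (∫ y in B, f' i y ∂μ) - ∫ y in B, C i N y ∂μ :=
                  integral_sub ((hf'int i).integrableOn) ((hCint i N).integrableOn)
                rw [show (fun y => f' i y - C i N y) = f' i - C i N from rfl] at h3
                rw [h3, h1, h2, sub_self]
      · obtain ⟨j, hj⟩ := hodd
        have hjN : j < N := by omega
        obtain ⟨ha2j, hb2j, ha2j1, hb2j1⟩ := hidx j hjN
        have hak1 : a (2*j+1+1) = j+1 := by simp only [hadef]; omega
        have hbk1 : b (2*j+1+1) = j+1 := by simp only [hbdef]; omega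
        have hdiffeq : ∀ x : Ω' × Ω, gup (k+1) x - gup k x
            = ∑ i ∈ Finset.range (j+1), ε i x.1 • (C i (j+1) x.2 - C i j x.2) := by
          intro x
          rw [hgupdef]
          simp only [if_neg (show ¬ 2*N < k+1 by omega), if_neg hk]
          rw [hj, hak1, hbk1, ha2j1, hb2j1, ← Finset.sum_sub_distrib]
          exact Finset.sum_congr rfl fun i _ => (smul_sub _ _ _).symm
        have hBF : MeasurableSet[ℱ j] B := by
          rw [hm2def] at hB
          change MeasurableSet[if 2*N < k then (inferInstance : MeasurableSpace Ω) else (ℱ (b k) : MeasurableSpace Ω)] B at hB; rw [if_neg hk] at hB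
          rw [hj, hb2j1] at hB
          exact hB
        calc ∫ x in A ×ˢ B, (gup (k+1) x - gup k x) ∂(μ'.prod μ)
            = ∫ x in A ×ˢ B, (∑ i ∈ Finset.range (j+1),
                ε i x.1 • (C i (j+1) x.2 - C i j x.2)) ∂(μ'.prod μ) :=
              integral_congr_ae (ae_of_all _ fun x => hdiffeq x)
          _ = 0 := by
              refine hrect_gen (j+1) (fun i => C i (j+1) - C i j)
                (fun i => (hCint i (j+1)).sub (hCint i j)) A B ?_
              intro i _
              have h1 : ∫ y in B, C i (j+1) y ∂μ = ∫ y in B, f i y ∂μ :=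
                setIntegral_condExp (ℱ.le (j+1)) (hfi i) (ℱ.mono (by omega) _ hBF)
              have h2 : ∫ y in B, C i j y ∂μ = ∫ y in B, f i y ∂μ :=
                setIntegral_condExp (ℱ.le j) (hfi i) hBF
              have h3 : ∫ y in B, (C i (j+1) y - C i j y) ∂μ
                  = (∫ y in B, C i (j+1) y ∂μ) - ∫ y in B, C i j y ∂μ :=
                integral_sub ((hCint i (j+1)).integrableOn) ((hCint i j).integrableOn)
              rw [show (fun y => C i (j+1) y - C i j y) = C i (j+1) - C i j from rfl] at h3
              rw [h3, h1, h2, sub_self]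
  -- the martingale property downstairs
  have hstep : ∀ k, ν[g (k+1) | 𝒢 k] =ᵐ[ν] g k := by
    intro k
    refine (ae_eq_condExp_of_forall_setIntegral_eq (𝒢.le k) (hgint (k+1))
      (fun S hS hfin => (hgint k).integrableOn)
      (fun S hS hfin => ?_) ((hadp k).aestronglyMeasurable)).symm
    have hSamb : MeasurableSet S := hGle k _ hS
    rw [hνdef, setIntegral_map hSamb (by rw [← hνdef]; exact hgsm k) hΦmeas.aemeasurable,
      setIntegral_map hSamb (by rw [← hνdef]; exact hgsm (k+1)) hΦmeas.aemeasurable]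
    simp only [hcomp]
    have h0 := hstep0 k S hS
    rw [integral_sub ((hupint (k+1)).integrableOn) ((hupint k).integrableOn)] at h0
    exact (sub_eq_zero.1 h0).symm
  have hMart : Martingale g 𝒢 ν := Statement11Aux.martingale_nat' hadp hgint hstep
  -- apply the UMD hypothesis
  set σs : ℕ → ℝ := fun k => if Even k ∧ k < 2*N then 1 else -1 with hσdef
  have hσ : ∀ k, σs k = 1 ∨ σs k = -1 := by
    intro k
    rw [hσdef]
    simp only
    split_ifs
    · exact Or.inl rfl
    · exact Or.inr rfl
  set S1 : (ℕ → ℝ) → X := ∑ k ∈ Finset.range (2*N+1), (g (k+1) - g k) with hS1def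
  set S2 : (ℕ → ℝ) → X := ∑ k ∈ Finset.range (2*N+1), σs k • (g (k+1) - g k) with hS2def
  have hβ2 : eLpNorm S2 p ν ≤ ENNReal.ofReal βc * eLpNorm S1 p ν :=
    hβ (ℕ → ℝ) ν 𝒢 g hMart σs hσ (2*N+1)
  have hβ1 : eLpNorm S1 p ν ≤ ENNReal.ofReal βc * eLpNorm S1 p ν := by
    have h := hβ (ℕ → ℝ) ν 𝒢 g hMart (fun _ => (1:ℝ)) (fun _ => Or.inl rfl) (2*N+1)
    have hsum1 : (∑ k ∈ Finset.range (2*N+1), (fun _ => (1:ℝ)) k • (g (k+1) - g k)) = S1 := by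
      rw [hS1def]
      exact Finset.sum_congr rfl fun k _ => one_smul _ _
    rwa [hsum1] at h
  -- identification of S1 with the final value HH
  have hg0 : g 0 = 0 := by
    have ha0 : a 0 = 0 := by simp only [hadef]; omega
    rw [hgdef]
    simp only [if_neg (show ¬ 2*N < 0 by omega)]
    funext s
    rw [ha0]
    simp
  have hgM : g (2*N+1) = HH := by
    rw [hgdef]
    simp only [if_pos (show 2*N < 2*N+1 by omega)]
  have hS1H : S1 = HH := by
    rw [hS1def, Finset.sum_range_sub (f := g), hgM, hg0, sub_zero]
  -- the even-index increments
  have hdeven : ∀ j, j < N → g (2*j+1) - g (2*j) = fun s => EE j s • Ψ j j s := by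
    intro j hj
    obtain ⟨ha2j, hb2j, ha2j1, hb2j1⟩ := hidx j hj
    funext s
    rw [hgdef]
    simp only [Pi.sub_apply, if_neg (show ¬ 2*N < 2*j+1 by omega),
      if_neg (show ¬ 2*N < 2*j by omega)]
    rw [ha2j, hb2j, ha2j1, hb2j1, Finset.sum_range_succ, add_sub_cancel_left]
  set Tr : (ℕ → ℝ) → X := fun s => ∑ j ∈ Finset.range N, EE j s • Ψ j j s with hTrdef
  have htrans : S1 + S2 = (2:ℝ) • Tr := by
    rw [hS1def, hS2def, ← Finset.sum_add_distrib]
    have hcongr : ∀ k ∈ Finset.range (2*N+1), (g (k+1) - g k) + σs k • (g (k+1) - g k)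
        = (if Even k ∧ k < 2*N then (2:ℝ) else 0) • (g (k+1) - g k) := by
      intro k _
      rw [hσdef]
      simp only
      split_ifs with h
      · rw [one_smul]
        exact (two_smul ℝ _).symm
      · rw [neg_one_smul, add_neg_cancel, zero_smul]
    rw [Finset.sum_congr rfl hcongr,
      Statement11Aux.sum_even_transform N (fun k => g (k+1) - g k)]
    congr 1
    rw [hTrdef]
    rw [Finset.sum_congr rfl (fun j hj => hdeven j (Finset.mem_range.1 hj))]
    funext s
    rw [Finset.sum_apply]
  have hTreq : Tr = (2⁻¹:ℝ) • (S1 + S2) := by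
    rw [htrans, smul_smul]
    norm_num
  -- measurability of the sums
  have hgsmAmb : ∀ k, StronglyMeasurable (g k) := fun k => (hadp k).mono (hGle k)
  have hS1m : AEStronglyMeasurable S1 ν := by
    rw [hS1H, ← hgM]
    exact hgsm (2*N+1)
  have hS2m : AEStronglyMeasurable S2 ν := by
    have : S2 = fun s => ∑ k ∈ Finset.range (2*N+1), σs k • (g (k+1) s - g k s) := by
      funext s
      rw [hS2def, Finset.sum_apply]
      simp
    rw [this]
    refine (Finset.stronglyMeasurable_fun_sum _ fun k _ => ?_).aestronglyMeasurable
    exact ((hgsmAmb (k+1)).sub (hgsmAmb k)).const_smul (σs k)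
  have hhalfnn : ((‖(2⁻¹:ℝ)‖₊ : ℝ≥0) : ℝ≥0∞) = 2⁻¹ := by
    rw [nnnorm_inv, Real.nnnorm_two, ENNReal.coe_inv (by norm_num)]
    norm_num
  have hTrle : eLpNorm Tr p ν ≤ 2⁻¹ * (eLpNorm S1 p ν + eLpNorm S2 p ν) := by
    rw [hTreq, eLpNorm_const_smul, enorm_eq_nnnorm, hhalfnn]
    exact mul_le_mul_right (eLpNorm_add_le hS1m hS2m hp1) _
  have hmain : eLpNorm Tr p ν ≤ ENNReal.ofReal βc * eLpNorm S1 p ν := by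
    by_cases htop : eLpNorm S1 p ν = ⊤
    · rw [htop, ENNReal.mul_top (ne_of_gt (ENNReal.ofReal_pos.2 hβpos))]
      exact le_top
    by_cases h0 : eLpNorm S1 p ν = 0
    · have hS2z : eLpNorm S2 p ν = 0 := by
        refine le_antisymm ?_ zero_le
        calc eLpNorm S2 p ν ≤ ENNReal.ofReal βc * eLpNorm S1 p ν := hβ2
          _ = 0 := by rw [h0, mul_zero]
      calc eLpNorm Tr p ν ≤ 2⁻¹ * (eLpNorm S1 p ν + eLpNorm S2 p ν) := hTrle
        _ = 0 := by rw [h0, hS2z, add_zero, mul_zero]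
        _ ≤ _ := zero_le
    · have h1β : (1:ℝ≥0∞) ≤ ENNReal.ofReal βc := by
        have h := hβ1
        nth_rewrite 1 [← one_mul (eLpNorm S1 p ν)] at h
        exact (ENNReal.mul_le_mul_iff_left h0 htop).1 h
      calc eLpNorm Tr p ν ≤ 2⁻¹ * (eLpNorm S1 p ν + eLpNorm S2 p ν) := hTrle
        _ ≤ 2⁻¹ * (ENNReal.ofReal βc * eLpNorm S1 p ν
              + ENNReal.ofReal βc * eLpNorm S1 p ν) := by
            refine mul_le_mul_right (add_le_add ?_ hβ2) _
            nth_rewrite 1 [← one_mul (eLpNorm S1 p ν)]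
            exact mul_le_mul_left h1β _
        _ = ENNReal.ofReal βc * eLpNorm S1 p ν := by
            rw [← two_mul, ← mul_assoc,
              ENNReal.inv_mul_cancel two_ne_zero ENNReal.ofNat_ne_top, one_mul]
  -- transfer the two eLpNorms upstairs
  have hmCle : ∀ i j, mC i j ≤ (inferInstance : MeasurableSpace (ℕ → ℝ)) :=
    fun i j => iSup_le fun n => (measurable_pi_apply _).comap_le
  have hTrm : StronglyMeasurable Tr := by
    rw [hTrdef]
    refine Finset.stronglyMeasurable_fun_sum _ fun j _ => ?_
    refine ((measurable_pi_apply _).stronglyMeasurable).smul ?_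
    exact (hΨsm j j).mono (hmCle j j)
  have hLHSeq : eLpNorm (fun x : Ω' × Ω => ∑ j ∈ Finset.range N,
      ε j x.1 • C j j x.2) p (μ'.prod μ) = eLpNorm Tr p ν := by
    rw [hνdef, eLpNorm_map_measure (by rw [← hνdef]; exact hTrm.aestronglyMeasurable)
      hΦmeas.aemeasurable]
    congr 1
    funext x
    show _ = Tr (Φ x)
    rw [hTrdef]
    exact (Finset.sum_congr rfl fun j _ => by rw [hEEΦ, hΨΦ]).symm
  have hsnd : ∀ (u v : Ω → X), u =ᵐ[μ] v →
      ((fun x : Ω' × Ω => u x.2) =ᵐ[μ'.prod μ] fun x => v x.2) := by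
    intro u v huv
    have h0 : μ {ω | ¬ u ω = v ω} = 0 := ae_iff.1 huv
    obtain ⟨t, hsub, htm, ht0⟩ := exists_measurable_superset_of_null h0
    rw [Filter.EventuallyEq, ae_iff]
    refine measure_mono_null (t := (univ ×ˢ t : Set (Ω' × Ω))) (fun x hx => ?_) ?_
    · exact ⟨mem_univ _, hsub hx⟩
    · rw [Measure.prod_prod, ht0, mul_zero]
  have hRHSae : (fun x : Ω' × Ω => ∑ i ∈ Finset.range N, ε i x.1 • f' i x.2)
      =ᵐ[μ'.prod μ] (fun x => ∑ i ∈ Finset.range N, ε i x.1 • f i x.2) := by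
    have h1 : ∀ i ∈ Finset.range N,
        ∀ᵐ x ∂(μ'.prod μ), ε i x.1 • f' i x.2 = ε i x.1 • f i x.2 := by
      intro i _
      filter_upwards [hsnd (f' i) (f i) (hf'ae i).symm] with x hx
      rw [hx]
    have h2 : ∀ᵐ x ∂(μ'.prod μ), ∀ i ∈ Finset.range N,
        ε i x.1 • f' i x.2 = ε i x.1 • f i x.2 :=
      (Filter.eventually_all_finset _).2 h1
    filter_upwards [h2] with x hx
    exact Finset.sum_congr rfl fun i hi => hx i hi
  have hRHSeq : eLpNorm (fun x : Ω' × Ω => ∑ i ∈ Finset.range N,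
      ε i x.1 • f i x.2) p (μ'.prod μ) = eLpNorm HH p ν := by
    have hHHm : AEStronglyMeasurable HH (Measure.map Φ (μ'.prod μ)) := by
      rw [← hνdef, ← hgM]
      exact hgsm _
    rw [hνdef, eLpNorm_map_measure hHHm hΦmeas.aemeasurable]
    have hcompH : HH ∘ Φ = fun x => ∑ i ∈ Finset.range N, ε i x.1 • f' i x.2 := by
      funext x
      rw [hHHdef]
      simp only [Function.comp]
      exact Finset.sum_congr rfl fun i _ => by rw [hEEΦ, hΨFΦ]
    rw [hcompH]
    exact (eLpNorm_congr_ae hRHSae).symm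
  calc eLpNorm (fun x : Ω' × Ω => ∑ j ∈ Finset.range N,
        ε j x.1 • C j j x.2) p (μ'.prod μ)
      = eLpNorm Tr p ν := hLHSeq
    _ ≤ ENNReal.ofReal βc * eLpNorm S1 p ν := hmain
    _ = ENNReal.ofReal βc * eLpNorm HH p ν := by rw [hS1H]
    _ = ENNReal.ofReal βc * eLpNorm (fun x : Ω' × Ω => ∑ i ∈ Finset.range N,
        ε i x.1 • f i x.2) p (μ'.prod μ) := by rw [hRHSeq]


end
end
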